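/- arXiv:0906.1862 — 4 statements merged into one kernel-verified Lean document; each statement's English description precedes it below -/
import Mathlib

section
/- For every nonnegative integer k, the limit as ε → 0 of (ε−k)_{2k+1} / (2ε−2k)_{2k+1} equals (−1)^k · (k!)^2 / (2·(2k)!), which also equals (−1)^k · k! / (2^{2k+1} · (1/2)_k). -/
open Filter Topology

/-- Pochhammer symbol (rising factorial). -/
noncomputable def poch (x : ℂ) (n : ℕ) : ℂ := (ascPochhammer ℂ n).eval x

lemma poch_add (x : ℂ) (n m : ℕ) : poch x (n + m) = poch x n * poch (x + n) m := by
  have := congrArg (Polynomial.eval x) (ascPochhammer_mul ℂ n m)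
  simpa [poch, Polynomial.eval_comp] using this.symm

lemma poch_neg_self (n : ℕ) : poch (-(n:ℂ)) n = (-1)^n * n.factorial := by
  rw [poch, ascPochhammer_eval_neg_eq_descPochhammer, descPochhammer_eval_eq_descFactorial,
    Nat.descFactorial_self]

lemma poch_one (n : ℕ) : poch 1 n = n.factorial := by simp [poch]

lemma poch_half (k : ℕ) : poch (1/2) k * (4^k * k.factorial) = (Nat.factorial (2*k) : ℂ) := by
  induction k with
  | zero => simp [poch]
  | succ k ih =>
    have h1 : poch (1/2) (k+1) = poch (1/2) k * (1/2 + k) := by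
      rw [poch, ascPochhammer_succ_eval]; rfl
    have h3 : (Nat.factorial (2*(k+1)) : ℂ) = (2*k+2)*((2*k+1)*(Nat.factorial (2*k))) := by
      have h2 : 2*(k+1) = (2*k+1) + 1 := by ring
      rw [h2, Nat.factorial_succ, Nat.factorial_succ]
      push_cast; ring
    rw [h1, h3, Nat.factorial_succ]
    push_cast
    linear_combination ((1/2 + (k:ℂ)) * 4 * ((k:ℂ)+1)) * ih

/-- For every nonnegative integer `k`, the limit as `ε → 0` (along `ε ≠ 0`) of
`(ε−k)_{2k+1} / (2ε−2k)_{2k+1}` equals `(−1)^k (k!)^2 / (2 (2k)!)`,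
which also equals `(−1)^k k! / (2^{2k+1} (1/2)_k)`. -/
theorem limit_poch_ratio (k : ℕ) :
    Tendsto (fun ε : ℂ => poch (ε - k) (2*k+1) / poch (2*ε - 2*k) (2*k+1))
      (𝓝[≠] 0) (𝓝 ((-1)^k * ((Nat.factorial k : ℂ))^2 / (2 * (Nat.factorial (2*k) : ℂ)))) ∧
    (-1:ℂ)^k * ((Nat.factorial k : ℂ))^2 / (2 * (Nat.factorial (2*k) : ℂ)) =
      (-1)^k * (Nat.factorial k : ℂ) / (2^(2*k+1) * poch (1/2) k) := by
  constructor
  · -- numerator decomposition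
    have hnum : ∀ ε : ℂ, poch (ε - k) (2*k+1) =
        ε * (poch (ε - k) k * poch (ε + 1) k) := by
      intro ε
      have h : 2*k+1 = k + (1 + k) := by ring
      rw [h, poch_add, poch_add]
      have : ε - k + k = ε := by ring
      rw [this]
      have h1 : poch ε 1 = ε := by simp [poch, ascPochhammer_one]
      rw [h1]
      ring_nf
    have hden : ∀ ε : ℂ, poch (2*ε - 2*k) (2*k+1) =
        (2*ε) * poch (2*ε - 2*k) (2*k) := by
      intro ε
      rw [poch_add]
      have : 2*ε - 2*k + (2*k : ℕ) = 2*ε := by push_cast; ring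
      rw [this]
      have h1 : poch (2*ε) 1 = 2*ε := by simp [poch, ascPochhammer_one]
      rw [h1]; ring
    set F : ℂ → ℂ := fun ε => (poch (ε - k) k * poch (ε + 1) k) / (2 * poch (2*ε - 2*k) (2*k))
      with hF
    have heq : ∀ ε : ℂ, ε ≠ 0 → poch (ε - k) (2*k+1) / poch (2*ε - 2*k) (2*k+1) = F ε := by
      intro ε hε
      rw [hnum, hden, hF]
      have : (2*ε) * poch (2*ε - 2*k) (2*k) = ε * (2 * poch (2*ε - 2*k) (2*k)) := by ring
      rw [this, mul_div_mul_left _ _ hε]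
    have hcont : ContinuousAt F 0 := by
      apply ContinuousAt.div
      · exact ((((ascPochhammer ℂ k).continuous.comp (continuous_id.sub continuous_const)).mul
          ((ascPochhammer ℂ k).continuous.comp (continuous_id.add continuous_const)))).continuousAt
      · exact (continuous_const.mul ((ascPochhammer ℂ (2*k)).continuous.comp
          ((continuous_const.mul continuous_id).sub continuous_const))).continuousAt
      · show (2 : ℂ) * poch (2*0 - 2*k) (2*k) ≠ 0
        have : (2*(0:ℂ) - 2*k) = -((2*k : ℕ) : ℂ) := by push_cast; ring
        rw [this, poch_neg_self]
        simp [pow_mul, Nat.factorial_ne_zero]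
    have hF0 : F 0 = (-1)^k * ((Nat.factorial k : ℂ))^2 / (2 * (Nat.factorial (2*k) : ℂ)) := by
      have e1 : (0:ℂ) - k = -((k:ℕ) : ℂ) := by ring
      have e2 : (2*(0:ℂ) - 2*k) = -((2*k : ℕ) : ℂ) := by push_cast; ring_nf
      have e3 : (0:ℂ) + 1 = 1 := by ring
      rw [hF]
      simp only [e1, e2, e3, poch_neg_self, poch_one]
      rw [pow_mul]
      ring_nf
    have := hcont.tendsto
    rw [hF0] at this
    exact (this.mono_left nhdsWithin_le_nhds).congr'
      (eventually_nhdsWithin_of_forall (fun x hx => (heq x hx).symm))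
  · have h := poch_half k
    have hfk : (Nat.factorial k : ℂ) ≠ 0 := Nat.cast_ne_zero.mpr (Nat.factorial_ne_zero k)
    have hf2k : (Nat.factorial (2*k) : ℂ) ≠ 0 := Nat.cast_ne_zero.mpr (Nat.factorial_ne_zero _)
    have hpoch : poch (1/2) k ≠ 0 := by
      intro h0
      rw [h0, zero_mul] at h
      exact hf2k h.symm
    have hpow : (2:ℂ)^(2*k+1) = 2 * 4^k := by
      rw [pow_succ, pow_mul]; norm_num; ring
    field_simp
    rw [hpow, ← h]
    ring
end

section
/- Chaundy's identity: for complex a, b with a+b+1/2 and 3/2−a−b not nonpositive integers, the product ₂F₁(a, b; a+b+1/2; z) · ₂F₁(1/2−a, 1/2−b; 3/2−a−b; z) equals ₃F₂(1/2, a−b+1/2, b−a+1/2; a+b+1/2, 3/2−a−b; z), as an identity of formal power series in z. -/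
/-- Coefficient of `z^k` in the Gauss series `₂F₁(a,b;c;z)`. -/
noncomputable def coeff2F1 (a b c : ℂ) (k : ℕ) : ℂ :=
  poch a k * poch b k / (poch c k * (Nat.factorial k : ℂ))

/-- Coefficient of `z^k` in `₃F₂(a₁,a₂,a₃;b₁,b₂;z)`. -/
noncomputable def coeff3F2 (a₁ a₂ a₃ b₁ b₂ : ℂ) (k : ℕ) : ℂ :=
  poch a₁ k * poch a₂ k * poch a₃ k / (poch b₁ k * poch b₂ k * (Nat.factorial k : ℂ))

lemma poch_zero' (x : ℂ) : poch x 0 = 1 := by simp [poch]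

lemma poch_succ' (x : ℂ) (n : ℕ) : poch x (n+1) = poch x n * (x + n) := by
  simp [poch, ascPochhammer_succ_right]

lemma poch_ne_zero' {x : ℂ} (h : ∀ j : ℕ, x ≠ -(j:ℂ)) : ∀ n, poch x n ≠ 0 := by
  intro n
  induction n with
  | zero => simp [poch_zero']
  | succ n ih =>
    rw [poch_succ']
    exact mul_ne_zero ih (fun hx => h n (eq_neg_of_add_eq_zero_left hx))

lemma rec2F1 (a b c : ℂ) (hc : ∀ j : ℕ, c ≠ -(j:ℂ)) (i : ℕ) :
    coeff2F1 a b c (i+1) * ((c + i) * ((i:ℂ)+1)) =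
      coeff2F1 a b c i * ((a + i) * (b + i)) := by
  have hp : poch c i ≠ 0 := poch_ne_zero' hc i
  have hc1 : c + i ≠ 0 := fun hx => hc i (eq_neg_of_add_eq_zero_left hx)
  have hf : ((Nat.factorial i : ℕ) : ℂ) ≠ 0 := Nat.cast_ne_zero.mpr (Nat.factorial_ne_zero i)
  have hi1 : ((i:ℂ)+1) ≠ 0 := Nat.cast_add_one_ne_zero i
  unfold coeff2F1
  rw [poch_succ', poch_succ', poch_succ', Nat.factorial_succ]
  push_cast
  field_simp

lemma rec3F2 (a₁ a₂ a₃ b₁ b₂ : ℂ) (hb₁ : ∀ j : ℕ, b₁ ≠ -(j:ℂ))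
    (hb₂ : ∀ j : ℕ, b₂ ≠ -(j:ℂ)) (k : ℕ) :
    coeff3F2 a₁ a₂ a₃ b₁ b₂ (k+1) * ((b₁ + k) * (b₂ + k) * ((k:ℂ)+1)) =
      coeff3F2 a₁ a₂ a₃ b₁ b₂ k * ((a₁ + k) * (a₂ + k) * (a₃ + k)) := by
  have hp1 : poch b₁ k ≠ 0 := poch_ne_zero' hb₁ k
  have hp2 : poch b₂ k ≠ 0 := poch_ne_zero' hb₂ k
  have hc1 : b₁ + k ≠ 0 := fun hx => hb₁ k (eq_neg_of_add_eq_zero_left hx)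
  have hc2 : b₂ + k ≠ 0 := fun hx => hb₂ k (eq_neg_of_add_eq_zero_left hx)
  have hf : ((Nat.factorial k : ℕ) : ℂ) ≠ 0 := Nat.cast_ne_zero.mpr (Nat.factorial_ne_zero k)
  have hk1 : ((k:ℂ)+1) ≠ 0 := Nat.cast_add_one_ne_zero k
  unfold coeff3F2
  rw [poch_succ', poch_succ', poch_succ', poch_succ', poch_succ', Nat.factorial_succ]
  push_cast
  field_simp

set_option maxHeartbeats 1600000 in
/-- The per-term (Zeilberger certificate) identity. -/
lemma chaundy_perterm (a b : ℂ)
    (h1 : ∀ j : ℕ, a + b + 1/2 ≠ -(j:ℂ)) (h2 : ∀ j : ℕ, 3/2 - a - b ≠ -(j:ℂ))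
    (i j k : ℕ) (hk : i + j = k) :
    ((a+b+1/2+k) * (3/2-a-b+k) * ((k:ℂ)+1)) *
        (coeff2F1 a b (a+b+1/2) i * coeff2F1 (1/2-a) (1/2-b) (3/2-a-b) (j+1))
      - ((1/2+k) * (a-b+1/2+k) * (b-a+1/2+k)) *
        (coeff2F1 a b (a+b+1/2) i * coeff2F1 (1/2-a) (1/2-b) (3/2-a-b) j)
    = (((i:ℂ)+1) * ((a+b-1/2)*(a+b-3*k-7/2) + 3*(a+b-(k:ℂ)-3/2)*((i:ℂ)+1)
          + 2*((i:ℂ)+1)^2)) *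
        (coeff2F1 a b (a+b+1/2) (i+1) * coeff2F1 (1/2-a) (1/2-b) (3/2-a-b) j)
      - ((i:ℂ) * ((a+b-1/2)*(a+b-3*k-7/2) + 3*(a+b-(k:ℂ)-3/2)*(i:ℂ)
          + 2*(i:ℂ)^2)) *
        (coeff2F1 a b (a+b+1/2) i * coeff2F1 (1/2-a) (1/2-b) (3/2-a-b) (j+1)) := by
  subst hk
  have hA := rec2F1 a b (a+b+1/2) h1 i
  have hB := rec2F1 (1/2-a) (1/2-b) (3/2-a-b) h2 j
  have hci : (a+b+1/2 + (i:ℂ)) ≠ 0 := fun hx => h1 i (eq_neg_of_add_eq_zero_left hx)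
  have hcj : (3/2-a-b + (j:ℂ)) ≠ 0 := fun hx => h2 j (eq_neg_of_add_eq_zero_left hx)
  have hii : ((i:ℂ)+1) ≠ 0 := Nat.cast_add_one_ne_zero i
  have hjj : ((j:ℂ)+1) ≠ 0 := Nat.cast_add_one_ne_zero j
  have hd : ((a+b+1/2+(i:ℂ))*((i:ℂ)+1)) * ((3/2-a-b+(j:ℂ))*((j:ℂ)+1)) ≠ 0 :=
    mul_ne_zero (mul_ne_zero hci hii) (mul_ne_zero hcj hjj)
  push_cast
  apply mul_right_cancel₀ hd
  linear_combination
    (-((((i:ℂ)+1) * ((a+b-1/2)*(a+b-3*((i:ℂ)+(j:ℂ))-7/2)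
          + 3*(a+b-((i:ℂ)+(j:ℂ))-3/2)*((i:ℂ)+1) + 2*((i:ℂ)+1)^2)))
        * coeff2F1 (1/2-a) (1/2-b) (3/2-a-b) j
        * ((3/2-a-b+(j:ℂ))*((j:ℂ)+1))) * hA
    + (((a+b+1/2+((i:ℂ)+(j:ℂ))) * (3/2-a-b+((i:ℂ)+(j:ℂ))) * (((i:ℂ)+(j:ℂ))+1)
          + ((i:ℂ) * ((a+b-1/2)*(a+b-3*((i:ℂ)+(j:ℂ))-7/2)
              + 3*(a+b-((i:ℂ)+(j:ℂ))-3/2)*(i:ℂ) + 2*(i:ℂ)^2)))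
        * coeff2F1 a b (a+b+1/2) i
        * ((a+b+1/2+(i:ℂ))*((i:ℂ)+1))) * hB

/-- Chaundy's identity:
`₂F₁(a,b;a+b+1/2;z) ₂F₁(1/2−a,1/2−b;3/2−a−b;z) = ₃F₂(1/2,a−b+1/2,b−a+1/2;a+b+1/2,3/2−a−b;z)`
as formal power series. -/
theorem chaundy_identity (a b : ℂ)
    (h1 : ∀ j : ℕ, a + b + 1/2 ≠ -(j:ℂ)) (h2 : ∀ j : ℕ, 3/2 - a - b ≠ -(j:ℂ)) :
    ∀ k : ℕ, ∑ i ∈ Finset.range (k+1),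
        coeff2F1 a b (a+b+1/2) i * coeff2F1 (1/2-a) (1/2-b) (3/2-a-b) (k-i) =
      coeff3F2 (1/2) (a-b+1/2) (b-a+1/2) (a+b+1/2) (3/2-a-b) k := by
  set A : ℕ → ℂ := coeff2F1 a b (a+b+1/2) with hAdef
  set B : ℕ → ℂ := coeff2F1 (1/2-a) (1/2-b) (3/2-a-b) with hBdef
  -- the recurrence for the convolution
  have key : ∀ k : ℕ,
      ((a+b+1/2+k) * (3/2-a-b+k) * ((k:ℂ)+1)) *
        ∑ i ∈ Finset.range (k+2), A i * B (k+1-i)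
      = ((1/2+k) * (a-b+1/2+k) * (b-a+1/2+k)) *
        ∑ i ∈ Finset.range (k+1), A i * B (k-i) := by
    intro k
    set p : ℂ := (a+b+1/2+k) * (3/2-a-b+k) * ((k:ℂ)+1) with hp
    set q : ℂ := (1/2+k) * (a-b+1/2+k) * (b-a+1/2+k) with hq
    set P : ℕ → ℂ := fun m => (m:ℂ) * ((a+b-1/2)*(a+b-3*k-7/2)
        + 3*(a+b-(k:ℂ)-3/2)*(m:ℂ) + 2*(m:ℂ)^2) with hP
    set H : ℕ → ℂ := fun m => P m * (A m * B (k+1-m)) with hH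
    have tele : ∑ i ∈ Finset.range (k+1), (H (i+1) - H i) = H (k+1) - H 0 :=
      Finset.sum_range_sub H (k+1)
    have hterm : ∀ i ∈ Finset.range (k+1),
        p * (A i * B (k+1-i)) - q * (A i * B (k-i)) = H (i+1) - H i := by
      intro i hi
      have hik : i ≤ k := Nat.lt_succ_iff.mp (Finset.mem_range.mp hi)
      have hkk : i + (k - i) = k := Nat.add_sub_cancel' hik
      have h1i : k + 1 - i = (k - i) + 1 := by omega
      have h2i : k + 1 - (i+1) = k - i := by omega
      have := chaundy_perterm a b h1 h2 i (k - i) k hkk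
      rw [hH]
      simp only [h1i, h2i, hAdef, hBdef, hp, hq, hP]
      push_cast
      exact this
    have hsum : ∑ i ∈ Finset.range (k+1),
        (p * (A i * B (k+1-i)) - q * (A i * B (k-i))) = H (k+1) - H 0 := by
      rw [Finset.sum_congr rfl hterm]; exact tele
    have hH0 : H 0 = 0 := by simp [hH, hP]
    have hB0 : B 0 = 1 := by simp [hBdef, coeff2F1, poch_zero']
    have hHk1 : H (k+1) = -p * A (k+1) := by
      have e1 : H (k+1) = P (k+1) * (A (k+1) * B 0) := by simp [hH]
      rw [e1, hB0, hP, hp]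
      push_cast
      ring
    have hsplit : ∑ i ∈ Finset.range (k+2), A i * B (k+1-i)
        = (∑ i ∈ Finset.range (k+1), A i * B (k+1-i)) + A (k+1) * B 0 := by
      rw [Finset.sum_range_succ]
      simp
    rw [hsplit, hB0]
    have expand : ∑ i ∈ Finset.range (k+1),
        (p * (A i * B (k+1-i)) - q * (A i * B (k-i)))
        = p * (∑ i ∈ Finset.range (k+1), A i * B (k+1-i))
          - q * (∑ i ∈ Finset.range (k+1), A i * B (k-i)) := by
      rw [Finset.sum_sub_distrib, Finset.mul_sum, Finset.mul_sum]
    rw [expand, hH0, hHk1] at hsum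
    linear_combination hsum
  -- nonvanishing of p
  have hpne : ∀ k : ℕ, (a+b+1/2+k) * (3/2-a-b+k) * ((k:ℂ)+1) ≠ 0 := by
    intro k
    exact mul_ne_zero (mul_ne_zero
      (fun hx => h1 k (eq_neg_of_add_eq_zero_left hx))
      (fun hx => h2 k (eq_neg_of_add_eq_zero_left hx)))
      (Nat.cast_add_one_ne_zero k)
  intro k
  induction k with
  | zero =>
    norm_num [hAdef, hBdef, coeff2F1, coeff3F2, poch_zero']
  | succ k ih =>
    have hR := rec3F2 (1/2) (a-b+1/2) (b-a+1/2) (a+b+1/2) (3/2-a-b) h1 h2 k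
    have hk := key k
    rw [ih] at hk
    apply mul_left_cancel₀ (hpne k)
    linear_combination hk - hR
end

section
/- For every nonnegative integer m and every complex number a such that all terms are defined, the following identity of power series holds: ₂F₁(a, −a−m; 1/2−m; z)² + C · z^{2m+1} · ₂F₁(a+m+1/2, 1/2−a; m+3/2; z)² = ₃F₂(2a, −2a−2m, −m; 1/2−m, −2m; z), where C = (a+1/2)_m² (a)_{m+1}² / ((1/2)_m² (1/2)_{m+1}²), and the ₃F₂ series is interpreted as the terminating sum Σ_{k=0}^{m} (2a)_k(−2a−2m)_k(−m)_k / ((1/2−m)_k(−2m)_k k!) z^k. -/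
/-- The Gauss hypergeometric series `₂F₁(a,b;c;z)` (as a sum, convergent for `‖z‖ < 1`). -/
noncomputable def hyp2F1 (a b c z : ℂ) : ℂ :=
  ∑' k : ℕ, poch a k * poch b k / (poch c k * (Nat.factorial k : ℂ)) * z ^ k

namespace DC

lemma poch_zero (x : ℂ) : poch x 0 = 1 := by simp [poch]

lemma poch_succ (x : ℂ) (n : ℕ) : poch x (n+1) = poch x n * (x + n) := by
  simp [poch, ascPochhammer_succ_eval]

lemma poch_ne_zero {x : ℂ} (h : ∀ i : ℕ, x + (i:ℂ) ≠ 0) (n : ℕ) : poch x n ≠ 0 := by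
  induction n with
  | zero => simp [poch_zero]
  | succ n ih => rw [poch_succ]; exact mul_ne_zero ih (h n)

lemma poch_prod (x : ℂ) (n : ℕ) : poch x n = ∏ k ∈ Finset.range n, (x + k) := by
  induction n with
  | zero => simp [poch_zero]
  | succ n ih => rw [poch_succ, ih, Finset.prod_range_succ]

noncomputable def AA (α β γ : ℂ) (i : ℕ) : ℂ :=
  poch α i * poch β i / (poch γ i * (Nat.factorial i : ℂ))

noncomputable def cc (α β γ : ℂ) (k : ℕ) : ℂ :=
  ∑ i ∈ Finset.range (k+1), AA α β γ i * AA α β γ (k - i)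

lemma AA_zero (α β γ : ℂ) : AA α β γ 0 = 1 := by simp [AA, poch_zero]

lemma cc_zero (α β γ : ℂ) : cc α β γ 0 = 1 := by simp [cc, AA_zero]

lemma AA_succ (α β γ : ℂ) (hγ : ∀ i : ℕ, γ + (i:ℂ) ≠ 0) (i : ℕ) :
    (γ + i) * ((i:ℂ)+1) * AA α β γ (i+1) = (α + i) * (β + i) * AA α β γ i := by
  have hp : poch γ i ≠ 0 := poch_ne_zero hγ i
  have hf : ((Nat.factorial i : ℕ) : ℂ) ≠ 0 := Nat.cast_ne_zero.mpr (Nat.factorial_ne_zero i)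
  have hi : ((i:ℂ)+1) ≠ 0 := by
    intro h
    have : ((i+1 : ℕ):ℂ) = ((0:ℕ):ℂ) := by push_cast; linear_combination h
    have := Nat.cast_injective (R := ℂ) this
    omega
  unfold AA
  rw [poch_succ, poch_succ, poch_succ, Nat.factorial_succ]
  push_cast
  field_simp [hp, hf, hγ i, hi]

end DC

namespace DC

/-- certificate polynomial -/
noncomputable def sg (α β K t : ℂ) : ℂ :=
  t * (1 + (3/2)*K - (α+β)*(1+3*K) - 2*(α+β)^2) - 3*(1+K)*t^2 + 2*t^3

set_option maxHeartbeats 3200000 in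
lemma cast_succ_ne (i : ℕ) : ((i:ℂ)+1) ≠ 0 := by
  intro h
  have : ((i+1 : ℕ):ℂ) = ((0:ℕ):ℂ) := by push_cast; linear_combination h
  have := Nat.cast_injective (R := ℂ) this; omega

set_option maxHeartbeats 3200000 in
lemma REC (α β γ : ℂ) (hγeq : γ = α + β + 1/2) (hγ : ∀ i : ℕ, γ + (i:ℂ) ≠ 0) (k : ℕ) :
    ((k:ℂ)+1) * (γ + k) * (2*α + 2*β + k) * cc α β γ (k+1)
      = (2*α + k) * (2*β + k) * (α + β + k) * cc α β γ k := by
  subst hγeq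
  set γ : ℂ := α + β + 1/2 with hγdef
  set G : ℕ → ℂ := fun i => sg α β k i * AA α β γ i * AA α β γ (k+1-i) with hG
  have key : ∀ i ∈ Finset.range (k+1),
      ((k:ℂ)+1) * (γ + k) * (2*α + 2*β + k) * (AA α β γ i * AA α β γ (k+1-i))
        - (2*α + k) * (2*β + k) * (α + β + k) * (AA α β γ i * AA α β γ (k-i))
        = G (i+1) - G i := by
    intro i hi
    have hik' : i ≤ k := Nat.lt_succ_iff.mp (Finset.mem_range.mp hi)
    obtain ⟨j, rfl⟩ : ∃ j, k = i + j := ⟨k - i, by omega⟩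
    have e1 : i + j + 1 - i = j + 1 := by omega
    have e2 : i + j - i = j := by omega
    have e3 : i + j + 1 - (i+1) = j := by omega
    rw [e1, e2, hG]
    simp only [e3, e1]
    have d1 : (γ + i) * ((i:ℂ)+1) ≠ 0 := mul_ne_zero (hγ i) (cast_succ_ne i)
    have d2 : (γ + j) * ((j:ℂ)+1) ≠ 0 := mul_ne_zero (hγ j) (cast_succ_ne j)
    have hA1 : AA α β γ (i+1) = (α + i) * (β + i) * AA α β γ i / ((γ + i) * ((i:ℂ)+1)) := by
      rw [eq_div_iff d1]; linear_combination AA_succ α β γ hγ i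
    have hA2 : AA α β γ (j+1) = (α + j) * (β + j) * AA α β γ j / ((γ + j) * ((j:ℂ)+1)) := by
      rw [eq_div_iff d2]; linear_combination AA_succ α β γ hγ j
    rw [hA1, hA2]
    unfold sg
    push_cast
    field_simp [hγ i, hγ j, cast_succ_ne i, cast_succ_ne j]
    rw [hγdef]
    ring
  have main : ((k:ℂ)+1) * (γ + k) * (2*α + 2*β + k) * cc α β γ (k+1)
      - (2*α + k) * (2*β + k) * (α + β + k) * cc α β γ k = 0 := by
    rw [cc, cc, Finset.mul_sum, Finset.mul_sum, Finset.sum_range_succ (n := k+1)]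
    have ezero : k + 1 - (k+1) = 0 := by omega
    rw [ezero, AA_zero, mul_one]
    rw [add_sub_right_comm, ← Finset.sum_sub_distrib]
    have hsum : ∑ i ∈ Finset.range (k+1),
        (((k:ℂ)+1) * (γ + k) * (2*α + 2*β + k) * (AA α β γ i * AA α β γ (k+1-i))
          - (2*α + k) * (2*β + k) * (α + β + k) * (AA α β γ i * AA α β γ (k-i)))
        = G (k+1) - G 0 := by
      rw [← Finset.sum_range_sub G (k+1)]
      exact Finset.sum_congr rfl key
    rw [hsum]
    have h0 : G (k+1) = sg α β (k:ℂ) (((k+1:ℕ)):ℂ) * AA α β γ (k+1) * 1 := by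
      rw [hG]; simp [Nat.sub_self, AA_zero]
    have h00 : G 0 = sg α β (k:ℂ) 0 * 1 * AA α β γ (k+1) := by
      rw [hG]; simp [AA_zero]
    have hcert : sg α β (k:ℂ) (((k+1:ℕ)):ℂ) - sg α β (k:ℂ) 0
        + ((k:ℂ)+1) * (γ + k) * (2*α + 2*β + k) = 0 := by
      unfold sg; rw [hγdef]; push_cast; ring
    linear_combination h0 - h00 + AA α β γ (k+1) * hcert
  linear_combination main

end DC

namespace DC

lemma PROD (α β γ : ℂ) (hγeq : γ = α + β + 1/2) (hγ : ∀ i : ℕ, γ + (i:ℂ) ≠ 0) (K : ℕ) :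
    (∏ k ∈ Finset.range K, (((k:ℂ)+1) * (γ + k) * (2*α + 2*β + k))) * cc α β γ K
      = ∏ k ∈ Finset.range K, ((2*α + k) * (2*β + k) * (α + β + k)) := by
  induction K with
  | zero => simp [cc_zero]
  | succ K ih =>
      rw [Finset.prod_range_succ, Finset.prod_range_succ]
      have h := REC α β γ hγeq hγ K
      linear_combination (∏ k ∈ Finset.range K, (((k:ℂ)+1) * (γ + k) * (2*α + 2*β + k))) * h
        + ((2*α + K) * (2*β + K) * (α + β + K)) * ih

/-- the 3F2 coefficient -/
noncomputable def RR (m : ℕ) (a : ℂ) (k : ℕ) : ℂ :=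
  poch (2*a) k * poch (-2*a - 2*(m:ℂ)) k * poch (-(m:ℂ)) k /
    (poch (1/2 - (m:ℂ)) k * poch (-2*(m:ℂ)) k * (Nat.factorial k : ℂ))

lemma half_sub_ne' (m i : ℕ) : (1/2 : ℂ) - (m:ℂ) + (i:ℂ) ≠ 0 := by
  intro h
  have h2 : ((2*i+1 : ℕ) : ℂ) = ((2*m : ℕ) : ℂ) := by push_cast; linear_combination 2*h
  have := Nat.cast_injective (R := ℂ) h2
  omega

lemma neg2m_ne {m k : ℕ} (h : k < 2*m) : -2*(m:ℂ) + (k:ℂ) ≠ 0 := by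
  intro h0
  have h2 : ((k : ℕ) : ℂ) = ((2*m : ℕ) : ℂ) := by push_cast; linear_combination h0
  have := Nat.cast_injective (R := ℂ) h2
  omega

lemma poch_neg2m_ne {m k : ℕ} (h : k ≤ 2*m) : poch (-2*(m:ℂ)) k ≠ 0 := by
  rw [poch_prod]
  apply Finset.prod_ne_zero_iff.mpr
  intro j hj
  exact neg2m_ne (lt_of_lt_of_le (Finset.mem_range.mp hj) h)

lemma poch_half_sub_ne (m k : ℕ) : poch ((1/2:ℂ) - (m:ℂ)) k ≠ 0 :=
  poch_ne_zero (fun i => half_sub_ne' m i) k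

lemma fact_ne (k : ℕ) : ((Nat.factorial k : ℕ) : ℂ) ≠ 0 :=
  Nat.cast_ne_zero.mpr (Nat.factorial_ne_zero k)

set_option maxHeartbeats 1600000 in
/-- Z1: `c_k = R_k` for `k ≤ 2m`. -/
lemma Z1 (m : ℕ) (a : ℂ) : ∀ k, k ≤ 2*m →
    cc a (-a - (m:ℂ)) (1/2 - (m:ℂ)) k = RR m a k := by
  have hγeq : (1/2 : ℂ) - (m:ℂ) = a + (-a - (m:ℂ)) + 1/2 := by ring
  have hγ : ∀ i : ℕ, (1/2 : ℂ) - (m:ℂ) + (i:ℂ) ≠ 0 := half_sub_ne' m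
  intro k
  induction k with
  | zero => intro _; simp [cc_zero, RR, poch_zero]
  | succ k ih =>
      intro hk
      have hk' : k ≤ 2*m := by omega
      have hck := ih hk'
      have hrec := REC a (-a - (m:ℂ)) (1/2 - (m:ℂ)) hγeq hγ k
      have hP : ((k:ℂ)+1) * ((1/2 - (m:ℂ)) + k) * (2*a + 2*(-a - (m:ℂ)) + k) ≠ 0 := by
        refine mul_ne_zero (mul_ne_zero (cast_succ_ne k) ?_) ?_
        · exact half_sub_ne' m k
        · intro h0
          have h2 : ((k : ℕ) : ℂ) = ((2*m : ℕ) : ℂ) := by push_cast; linear_combination h0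
          have := Nat.cast_injective (R := ℂ) h2
          omega
      have hRstep : ((k:ℂ)+1) * ((1/2 - (m:ℂ)) + k) * (2*a + 2*(-a - (m:ℂ)) + k) * RR m a (k+1)
          = (2*a + k) * (2*(-a - (m:ℂ)) + k) * (a + (-a - (m:ℂ)) + k) * RR m a k := by
        have h1 : poch ((1/2:ℂ) - (m:ℂ)) k ≠ 0 := poch_half_sub_ne m k
        have h2 : poch (-2*(m:ℂ)) k ≠ 0 := poch_neg2m_ne hk'
        have h3 : -2*(m:ℂ) + (k:ℂ) ≠ 0 := neg2m_ne (by omega)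
        have h4 : (1/2:ℂ) - (m:ℂ) + (k:ℂ) ≠ 0 := hγ k
        have h5 : ((k+1:ℕ) : ℂ) ≠ 0 := Nat.cast_ne_zero.mpr (Nat.succ_ne_zero k)
        have h6 : ((Nat.factorial k : ℕ) : ℂ) ≠ 0 := fact_ne k
        have hD : poch ((1/2:ℂ) - (m:ℂ)) k * poch (-2*(m:ℂ)) k * (Nat.factorial k : ℂ) ≠ 0 :=
          mul_ne_zero (mul_ne_zero h1 h2) h6
        have hD' : poch ((1/2:ℂ) - (m:ℂ)) k * ((1/2:ℂ) - (m:ℂ) + k) *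
            (poch (-2*(m:ℂ)) k * (-2*(m:ℂ) + k)) * (((k+1:ℕ):ℂ) * (Nat.factorial k : ℂ)) ≠ 0 := by
          apply mul_ne_zero (mul_ne_zero (mul_ne_zero h1 h4) (mul_ne_zero h2 h3))
            (mul_ne_zero h5 h6)
        unfold RR
        rw [poch_succ, poch_succ, poch_succ, poch_succ, poch_succ, Nat.factorial_succ,
          Nat.cast_mul]
        simp only [← mul_div_assoc]
        rw [div_eq_div_iff hD' hD]
        push_cast
        ring
      rw [hck] at hrec
      rw [← hRstep] at hrec
      exact mul_left_cancel₀ hP hrec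

end DC

namespace DC
open Finset

set_option maxHeartbeats 1600000 in
lemma ID (m : ℕ) (a : ℂ) :
    (∏ k ∈ range (2*m+1), (2*a+(k:ℂ))) * (∏ k ∈ range (2*m+1), (-2*a-2*(m:ℂ)+(k:ℂ)))
      * (∏ k ∈ range m, (-(m:ℂ)+(k:ℂ))) * (∏ k ∈ range m, (1+(k:ℂ)))
      * ((poch (1/2) m)^2 * (poch (1/2) (m+1))^2)
    = -2 * ((poch (a+1/2) m)^2 * (poch a (m+1))^2)
      * (∏ k ∈ range (2*m+1), ((k:ℂ)+1)) * (∏ k ∈ range (2*m+1), ((1/2:ℂ)-(m:ℂ)+(k:ℂ)))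
      * (∏ k ∈ range (2*m), (-2*(m:ℂ)+(k:ℂ))) := by
  induction m with
  | zero =>
      norm_num [poch_zero, poch_succ, prod_range_succ]
      ring
  | succ m ih =>
      have e1 : ∏ k ∈ range (2*(m+1)+1), (2*a+(k:ℂ))
          = (∏ k ∈ range (2*m+1), (2*a+(k:ℂ))) * ((2*a+2*(m:ℂ)+1) * (2*a+2*(m:ℂ)+2)) := by
        have hb : 2*(m+1)+1 = (2*m+1)+1+1 := by omega
        rw [hb, prod_range_succ, prod_range_succ]
        push_cast; ring
      have e2 : ∏ k ∈ range (2*(m+1)+1), (-2*a-2*((m+1:ℕ):ℂ)+(k:ℂ))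
          = ((-2*a-2*(m:ℂ)-2) * (-2*a-2*(m:ℂ)-1)) * ∏ k ∈ range (2*m+1), (-2*a-2*(m:ℂ)+(k:ℂ)) := by
        have hb : 2*(m+1)+1 = 2+(2*m+1) := by omega
        rw [hb, prod_range_add]
        have hcg : ∀ k ∈ range (2*m+1), (-2*a-2*((m+1:ℕ):ℂ)+((2+k:ℕ):ℂ)) = (-2*a-2*(m:ℂ)+(k:ℂ)) := by
          intro k _; push_cast; ring
        rw [prod_congr rfl hcg]
        simp only [prod_range_succ, prod_range_zero, one_mul]
        push_cast; ring
      have e3 : ∏ k ∈ range (m+1), (-((m+1:ℕ):ℂ)+(k:ℂ))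
          = (-(m:ℂ)-1) * ∏ k ∈ range m, (-(m:ℂ)+(k:ℂ)) := by
        rw [show range (m+1) = range (1+m) from by rw [Nat.add_comm], prod_range_add]
        have hcg : ∀ k ∈ range m, (-((m+1:ℕ):ℂ)+((1+k:ℕ):ℂ)) = (-(m:ℂ)+(k:ℂ)) := by
          intro k _; push_cast; ring
        rw [prod_congr rfl hcg]
        simp only [prod_range_succ, prod_range_zero, one_mul]
        push_cast; ring
      have e4 : ∏ k ∈ range (m+1), (1+(k:ℂ))
          = (∏ k ∈ range m, (1+(k:ℂ))) * (1+(m:ℂ)) := by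
        rw [prod_range_succ]
      have e5 : ∏ k ∈ range (2*(m+1)+1), ((k:ℂ)+1)
          = (∏ k ∈ range (2*m+1), ((k:ℂ)+1)) * ((2*(m:ℂ)+2) * (2*(m:ℂ)+3)) := by
        have hb : 2*(m+1)+1 = (2*m+1)+1+1 := by omega
        rw [hb, prod_range_succ, prod_range_succ]
        push_cast; ring
      have e6 : ∏ k ∈ range (2*(m+1)+1), ((1/2:ℂ)-((m+1:ℕ):ℂ)+(k:ℂ))
          = ((-(m:ℂ)-1/2) * ((m:ℂ)+3/2)) * ∏ k ∈ range (2*m+1), ((1/2:ℂ)-(m:ℂ)+(k:ℂ)) := by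
        have hb : 2*(m+1)+1 = (1+(2*m+1))+1 := by omega
        rw [hb, prod_range_succ, prod_range_add]
        have hcg : ∀ k ∈ range (2*m+1), ((1/2:ℂ)-((m+1:ℕ):ℂ)+((1+k:ℕ):ℂ)) = ((1/2:ℂ)-(m:ℂ)+(k:ℂ)) := by
          intro k _; push_cast; ring
        rw [prod_congr rfl hcg]
        simp only [prod_range_succ, prod_range_zero, one_mul]
        push_cast; ring
      have e7 : ∏ k ∈ range (2*(m+1)), (-2*((m+1:ℕ):ℂ)+(k:ℂ))
          = ((-2*(m:ℂ)-2) * (-2*(m:ℂ)-1)) * ∏ k ∈ range (2*m), (-2*(m:ℂ)+(k:ℂ)) := by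
        have hb : 2*(m+1) = 2+(2*m) := by omega
        rw [hb, prod_range_add]
        have hcg : ∀ k ∈ range (2*m), (-2*((m+1:ℕ):ℂ)+((2+k:ℕ):ℂ)) = (-2*(m:ℂ)+(k:ℂ)) := by
          intro k _; push_cast; ring
        rw [prod_congr rfl hcg]
        simp only [prod_range_succ, prod_range_zero, one_mul]
        push_cast; ring
      have p1 : poch (1/2) (m+1)^2 = poch (1/2) m^2 * ((1/2:ℂ)+(m:ℂ))^2 := by
        rw [poch_succ]; ring
      have p2 : poch (1/2) (m+1+1)^2 = poch (1/2) (m+1)^2 * ((1/2:ℂ)+((m+1:ℕ):ℂ))^2 := by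
        rw [poch_succ]; ring
      have p3 : poch (a+1/2) (m+1)^2 = poch (a+1/2) m^2 * (a+1/2+(m:ℂ))^2 := by
        rw [poch_succ]; ring
      have p4 : poch a (m+1+1)^2 = poch a (m+1)^2 * (a+((m+1:ℕ):ℂ))^2 := by
        rw [poch_succ]; ring
      rw [e1, e2, e3, e4, e5, e6, e7, p2, p3, p4, p1]
      rw [p1] at ih
      push_cast
      push_cast at ih
      linear_combination ((2*a+2*(m:ℂ)+1) * (2*a+2*(m:ℂ)+2) * (-2*a-2*(m:ℂ)-2) * (-2*a-2*(m:ℂ)-1)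
        * (-(m:ℂ)-1) * (1+(m:ℂ)) * ((1/2:ℂ)+(m:ℂ))^2 * ((m:ℂ)+3/2)^2) * ih

end DC

namespace DC
open Finset Filter Topology

noncomputable def Fp (m : ℕ) (a ε : ℂ) : ℂ := cc a (-a-(m:ℂ)-ε) (1/2-(m:ℂ)-ε) (2*m+1)

noncomputable def Xp (m : ℕ) (ε : ℂ) : ℂ :=
  (∏ k ∈ range (2*m+1), (((k:ℂ)+1) * ((1/2:ℂ)-(m:ℂ)-ε+(k:ℂ)))) *
    ∏ k ∈ range (2*m), (-2*(m:ℂ)-2*ε+(k:ℂ))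

noncomputable def Yp (m : ℕ) (a ε : ℂ) : ℂ :=
  (∏ k ∈ range (2*m+1), ((2*a+(k:ℂ)) * (-2*a-2*(m:ℂ)-2*ε+(k:ℂ)))) *
    ((∏ k ∈ range m, (-(m:ℂ)-ε+(k:ℂ))) * (∏ k ∈ range m, (1+(k:ℂ)-ε)))

set_option maxHeartbeats 1600000 in
lemma E1 (m : ℕ) (a ε : ℂ) (hγ : ∀ i : ℕ, (1/2:ℂ)-(m:ℂ)-ε+(i:ℂ) ≠ 0) (hε : ε ≠ 0) :
    2 * Fp m a ε * Xp m ε = Yp m a ε := by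
  have hγeq : (1/2:ℂ)-(m:ℂ)-ε = a + (-a-(m:ℂ)-ε) + 1/2 := by ring
  have hγ' : ∀ i : ℕ, ((1/2:ℂ)-(m:ℂ)-ε) + (i:ℂ) ≠ 0 := by
    intro i; have := hγ i; intro h; exact this (by linear_combination h)
  have hprod := PROD a (-a-(m:ℂ)-ε) ((1/2:ℂ)-(m:ℂ)-ε) hγeq hγ' (2*m+1)
  have hXfac : ∏ k ∈ range (2*m+1),
      (((k:ℂ)+1) * (((1/2:ℂ)-(m:ℂ)-ε) + (k:ℂ)) * (2*a + 2*(-a-(m:ℂ)-ε) + (k:ℂ)))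
      = (-2*ε) * Xp m ε := by
    have hsplit : ∀ k ∈ range (2*m+1),
        (((k:ℂ)+1) * (((1/2:ℂ)-(m:ℂ)-ε) + (k:ℂ)) * (2*a + 2*(-a-(m:ℂ)-ε) + (k:ℂ)))
          = (((k:ℂ)+1) * ((1/2:ℂ)-(m:ℂ)-ε+(k:ℂ))) * (-2*(m:ℂ)-2*ε+(k:ℂ)) := by
      intro k _; ring
    rw [prod_congr rfl hsplit, prod_mul_distrib]
    have hlast : ∏ k ∈ range (2*m+1), (-2*(m:ℂ)-2*ε+(k:ℂ))
        = (∏ k ∈ range (2*m), (-2*(m:ℂ)-2*ε+(k:ℂ))) * (-2*ε) := by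
      rw [prod_range_succ]
      congr 1
      push_cast; ring
    rw [hlast]
    unfold Xp; ring
  have hYfac : ∏ k ∈ range (2*m+1),
      ((2*a + (k:ℂ)) * (2*(-a-(m:ℂ)-ε) + (k:ℂ)) * ((a + (-a-(m:ℂ)-ε)) + (k:ℂ)))
      = (-ε) * Yp m a ε := by
    have hsplit : ∀ k ∈ range (2*m+1),
        ((2*a + (k:ℂ)) * (2*(-a-(m:ℂ)-ε) + (k:ℂ)) * ((a + (-a-(m:ℂ)-ε)) + (k:ℂ)))
          = ((2*a+(k:ℂ)) * (-2*a-2*(m:ℂ)-2*ε+(k:ℂ))) * (-(m:ℂ)-ε+(k:ℂ)) := by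
      intro k _; ring
    rw [prod_congr rfl hsplit, prod_mul_distrib]
    have hmid : ∏ k ∈ range (2*m+1), (-(m:ℂ)-ε+(k:ℂ))
        = ((∏ k ∈ range m, (-(m:ℂ)-ε+(k:ℂ))) * (-ε)) * ∏ k ∈ range m, (1+(k:ℂ)-ε) := by
      rw [show 2*m+1 = (m+1)+m from by omega, prod_range_add, prod_range_succ]
      have hcg : ∀ k ∈ range m, (-(m:ℂ)-ε+((m+1+k:ℕ):ℂ)) = (1+(k:ℂ)-ε) := by
        intro k _; push_cast; ring
      rw [prod_congr rfl hcg]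
      congr 2
      push_cast; ring
    rw [hmid]
    unfold Yp; ring
  rw [hXfac, hYfac] at hprod
  have h2 : (-ε) * (2 * Fp m a ε * Xp m ε) = (-ε) * Yp m a ε := by
    unfold Fp
    linear_combination hprod
  exact mul_left_cancel₀ (neg_ne_zero.mpr hε) h2

end DC

namespace DC
open Finset Filter Topology

lemma poch_cont (c : ℂ) (i : ℕ) : Continuous fun ε : ℂ => poch (c - ε) i := by
  unfold poch
  exact (Polynomial.continuous _).comp (continuous_const.sub continuous_id)

lemma Fp_contAt (m : ℕ) (a : ℂ) : ContinuousAt (fun ε => Fp m a ε) 0 := by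
  unfold Fp cc
  apply tendsto_finset_sum
  intro i _
  have h1 : ∀ j : ℕ, ContinuousAt (fun ε : ℂ => AA a (-a-(m:ℂ)-ε) (1/2-(m:ℂ)-ε) j) 0 := by
    intro j
    unfold AA
    apply ContinuousAt.div
    · exact (continuous_const.mul (poch_cont (-a-(m:ℂ)) j)).continuousAt
    · exact ((poch_cont ((1/2:ℂ)-(m:ℂ)) j).mul continuous_const).continuousAt
    · simp only [sub_zero]
      exact mul_ne_zero (poch_half_sub_ne m j) (fact_ne j)
  exact ((h1 i).mul (h1 (2*m+1-i)))
end DC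

namespace DC
open Finset Filter Topology

lemma half_pos_ne (i : ℕ) : (1/2:ℂ) + (i:ℂ) ≠ 0 := by
  intro h
  have h2 : ((2*i+1 : ℕ) : ℂ) = ((0 : ℕ) : ℂ) := by push_cast; linear_combination 2*h
  have := Nat.cast_injective (R := ℂ) h2
  omega

lemma poch_half_ne (n : ℕ) : poch (1/2) n ≠ 0 := poch_ne_zero half_pos_ne n

lemma img_ne (x : ℝ) (hx : x ≠ 0) (r : ℂ) (hr : r.im = 0) : r - Complex.I * (x:ℂ) ≠ 0 := by
  intro h
  have him := congrArg Complex.im h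
  simp [Complex.sub_im, Complex.mul_im, hr] at him
  exact hx him

set_option maxHeartbeats 1600000 in
lemma VAL (m : ℕ) (a : ℂ) :
    cc a (-a-(m:ℂ)) (1/2-(m:ℂ)) (2*m+1)
      = -(poch (a+1/2) m^2 * poch a (m+1)^2 / (poch (1/2) m^2 * poch (1/2) (m+1)^2)) := by
  set u : ℕ → ℂ := fun n => Complex.I * (((1/((n:ℝ)+1) : ℝ)) : ℂ) with hu_def
  have htr : Tendsto (fun n : ℕ => (1/((n:ℝ)+1) : ℝ)) atTop (𝓝 0) :=
    tendsto_one_div_add_atTop_nhds_zero_nat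
  have htc : Tendsto (fun n : ℕ => (((1/((n:ℝ)+1) : ℝ)) : ℂ)) atTop (𝓝 ((0:ℝ):ℂ)) :=
    (Complex.continuous_ofReal.tendsto 0).comp htr
  have hu : Tendsto u atTop (𝓝 0) := by
    have h0 : Complex.I * ((0:ℝ):ℂ) = 0 := by simp
    rw [hu_def]
    exact h0 ▸ (htc.const_mul Complex.I)
  have hxne : ∀ n : ℕ, (1/((n:ℝ)+1) : ℝ) ≠ 0 := by
    intro n
    positivity
  have hun : ∀ n, u n ≠ 0 := by
    intro n
    exact mul_ne_zero Complex.I_ne_zero (by exact_mod_cast Complex.ofReal_ne_zero.mpr (hxne n))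
  have hγn : ∀ n : ℕ, ∀ i : ℕ, (1/2:ℂ)-(m:ℂ)-(u n)+(i:ℂ) ≠ 0 := by
    intro n i
    have h := img_ne (1/((n:ℝ)+1)) (hxne n) ((1/2:ℂ)-(m:ℂ)+(i:ℂ))
      (by simp [Complex.sub_im, Complex.add_im])
    intro hcontra
    have hc2 : (1/2:ℂ)-(m:ℂ)-(Complex.I * (((1/((n:ℝ)+1) : ℝ)) : ℂ))+(i:ℂ) = 0 := hcontra
    exact h (by linear_combination hc2)
  have hXc : Continuous (Xp m) := by
    unfold Xp
    exact (continuous_finset_prod _ (fun k _ => by continuity)).mul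
      (continuous_finset_prod _ (fun k _ => by continuity))
  have hYc : Continuous (Yp m a) := by
    unfold Yp
    exact (continuous_finset_prod _ (fun k _ => by continuity)).mul
      ((continuous_finset_prod _ (fun k _ => by continuity)).mul
        (continuous_finset_prod _ (fun k _ => by continuity)))
  have hc1 : ContinuousAt (fun ε => 2 * Fp m a ε * Xp m ε) 0 :=
    (continuousAt_const.mul (Fp_contAt m a)).mul hXc.continuousAt
  have lim1 : Tendsto (fun n => 2 * Fp m a (u n) * Xp m (u n)) atTop
      (𝓝 (2 * Fp m a 0 * Xp m 0)) := hc1.tendsto.comp hu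
  have lim2 : Tendsto (fun n => Yp m a (u n)) atTop (𝓝 (Yp m a 0)) :=
    hYc.continuousAt.tendsto.comp hu
  have heq : ∀ n, 2 * Fp m a (u n) * Xp m (u n) = Yp m a (u n) :=
    fun n => E1 m a (u n) (hγn n) (hun n)
  have key0 : 2 * Fp m a 0 * Xp m 0 = Yp m a 0 :=
    tendsto_nhds_unique (lim1.congr heq) lim2
  have hF0 : Fp m a 0 = cc a (-a-(m:ℂ)) (1/2-(m:ℂ)) (2*m+1) := by
    unfold Fp
    norm_num
  have hX0 : Xp m 0 = (∏ k ∈ range (2*m+1), ((k:ℂ)+1)) *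
      (∏ k ∈ range (2*m+1), ((1/2:ℂ)-(m:ℂ)+(k:ℂ))) *
      (∏ k ∈ range (2*m), (-2*(m:ℂ)+(k:ℂ))) := by
    unfold Xp
    simp only [mul_zero, sub_zero]
    rw [prod_mul_distrib]
  have hY0 : Yp m a 0 = (∏ k ∈ range (2*m+1), (2*a+(k:ℂ))) *
      (∏ k ∈ range (2*m+1), (-2*a-2*(m:ℂ)+(k:ℂ))) *
      ((∏ k ∈ range m, (-(m:ℂ)+(k:ℂ))) * (∏ k ∈ range m, (1+(k:ℂ)))) := by
    unfold Yp
    simp only [mul_zero, sub_zero]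
    rw [prod_mul_distrib]
  rw [hF0, hX0, hY0] at key0
  have hPE : (∏ k ∈ range (2*m+1), ((k:ℂ)+1)) ≠ 0 :=
    prod_ne_zero_iff.mpr (fun k _ => cast_succ_ne k)
  have hPF : (∏ k ∈ range (2*m+1), ((1/2:ℂ)-(m:ℂ)+(k:ℂ))) ≠ 0 :=
    prod_ne_zero_iff.mpr (fun k _ => half_sub_ne' m k)
  have hPG : (∏ k ∈ range (2*m), (-2*(m:ℂ)+(k:ℂ))) ≠ 0 :=
    prod_ne_zero_iff.mpr (fun k hk => neg2m_ne (mem_range.mp hk))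
  have hD1 : poch (1/2) m^2 * poch (1/2) (m+1)^2 ≠ 0 :=
    mul_ne_zero (pow_ne_zero _ (poch_half_ne m)) (pow_ne_zero _ (poch_half_ne (m+1)))
  have hPEFG : (∏ k ∈ range (2*m+1), ((k:ℂ)+1)) *
      (∏ k ∈ range (2*m+1), ((1/2:ℂ)-(m:ℂ)+(k:ℂ))) *
      (∏ k ∈ range (2*m), (-2*(m:ℂ)+(k:ℂ))) ≠ 0 :=
    mul_ne_zero (mul_ne_zero hPE hPF) hPG
  have h2 : (2 * ((∏ k ∈ range (2*m+1), ((k:ℂ)+1)) *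
        (∏ k ∈ range (2*m+1), ((1/2:ℂ)-(m:ℂ)+(k:ℂ))) *
        (∏ k ∈ range (2*m), (-2*(m:ℂ)+(k:ℂ))))) *
      (cc a (-a-(m:ℂ)) (1/2-(m:ℂ)) (2*m+1) * (poch (1/2) m^2 * poch (1/2) (m+1)^2))
      = (2 * ((∏ k ∈ range (2*m+1), ((k:ℂ)+1)) *
        (∏ k ∈ range (2*m+1), ((1/2:ℂ)-(m:ℂ)+(k:ℂ))) *
        (∏ k ∈ range (2*m), (-2*(m:ℂ)+(k:ℂ))))) *
      (-(poch (a+1/2) m^2 * poch a (m+1)^2)) := by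
    linear_combination (poch (1/2) m^2 * poch (1/2) (m+1)^2) * key0 + ID m a
  have hmain := mul_left_cancel₀ (mul_ne_zero two_ne_zero hPEFG) h2
  rw [← neg_div, eq_div_iff hD1]
  exact hmain

end DC

namespace DC
open Finset Filter Topology

lemma half_add_ne (m i : ℕ) : (m:ℂ) + 3/2 + (i:ℂ) ≠ 0 := by
  intro h
  have h2 : ((2*m+3+2*i : ℕ) : ℂ) = ((0 : ℕ) : ℂ) := by push_cast; linear_combination 2*h
  have := Nat.cast_injective (R := ℂ) h2
  omega

lemma Z2 (m : ℕ) (a : ℂ) : ∀ j : ℕ,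
    cc a (-a-(m:ℂ)) (1/2-(m:ℂ)) (2*m+1+j)
      = -(poch (a+1/2) m^2 * poch a (m+1)^2 / (poch (1/2) m^2 * poch (1/2) (m+1)^2)) *
        cc (a+(m:ℂ)+1/2) (1/2-a) ((m:ℂ)+3/2) j := by
  have hγeq1 : (1/2:ℂ)-(m:ℂ) = a + (-a-(m:ℂ)) + 1/2 := by ring
  have hγ1 : ∀ i : ℕ, (1/2:ℂ)-(m:ℂ)+(i:ℂ) ≠ 0 := half_sub_ne' m
  have hγeq2 : (m:ℂ)+3/2 = (a+(m:ℂ)+1/2) + ((1/2:ℂ)-a) + 1/2 := by ring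
  have hγ2 : ∀ i : ℕ, (m:ℂ)+3/2+(i:ℂ) ≠ 0 := half_add_ne m
  intro j
  induction j with
  | zero =>
      rw [cc_zero, mul_one]
      exact VAL m a
  | succ j ih =>
      have hrec1 := REC a (-a-(m:ℂ)) ((1/2:ℂ)-(m:ℂ)) hγeq1 hγ1 (2*m+1+j)
      have hrec2 := REC (a+(m:ℂ)+1/2) ((1/2:ℂ)-a) ((m:ℂ)+3/2) hγeq2 hγ2 j
      have hP2ne : ((j:ℂ)+1) * (((m:ℂ)+3/2) + (j:ℂ)) * (2*(a+(m:ℂ)+1/2) + 2*((1/2:ℂ)-a) + (j:ℂ)) ≠ 0 := by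
        refine mul_ne_zero (mul_ne_zero (cast_succ_ne j) (hγ2 j)) ?_
        intro h
        have h2 : ((2*m+2+j : ℕ) : ℂ) = ((0:ℕ) : ℂ) := by push_cast; linear_combination h
        have := Nat.cast_injective (R := ℂ) h2
        omega
      have hPeq : ((((2*m+1+j : ℕ)):ℂ)+1) * (((1/2:ℂ)-(m:ℂ)) + ((2*m+1+j : ℕ):ℂ)) *
            (2*a + 2*(-a-(m:ℂ)) + ((2*m+1+j : ℕ):ℂ))
          = ((j:ℂ)+1) * (((m:ℂ)+3/2) + (j:ℂ)) * (2*(a+(m:ℂ)+1/2) + 2*((1/2:ℂ)-a) + (j:ℂ)) := by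
        push_cast; ring
      have hQeq : (2*a + ((2*m+1+j : ℕ):ℂ)) * (2*(-a-(m:ℂ)) + ((2*m+1+j : ℕ):ℂ)) *
            (a + (-a-(m:ℂ)) + ((2*m+1+j : ℕ):ℂ))
          = (2*(a+(m:ℂ)+1/2) + (j:ℂ)) * (2*((1/2:ℂ)-a) + (j:ℂ)) *
            ((a+(m:ℂ)+1/2) + ((1/2:ℂ)-a) + (j:ℂ)) := by
        push_cast; ring
      have hidx : 2*m+1+(j+1) = 2*m+1+j+1 := by omega
      rw [hidx]
      apply mul_left_cancel₀ hP2ne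
      linear_combination hrec1
        - (cc a (-a-(m:ℂ)) (1/2-(m:ℂ)) (2*m+1+j+1)) * hPeq
        + ((2*a + ((2*m+1+j : ℕ):ℂ)) * (2*(-a-(m:ℂ)) + ((2*m+1+j : ℕ):ℂ)) *
            (a + (-a-(m:ℂ)) + ((2*m+1+j : ℕ):ℂ))) * ih
        + (-(poch (a+1/2) m^2 * poch a (m+1)^2 / (poch (1/2) m^2 * poch (1/2) (m+1)^2)) *
            cc (a+(m:ℂ)+1/2) (1/2-a) ((m:ℂ)+3/2) j) * hQeq
        - (-(poch (a+1/2) m^2 * poch a (m+1)^2 / (poch (1/2) m^2 * poch (1/2) (m+1)^2))) * hrec2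

end DC

namespace DC
open Finset Filter Topology

lemma inv_cast_tendsto : Tendsto (fun i : ℕ => 1/((i:ℂ)+1)) atTop (𝓝 0) := by
  have htr : Tendsto (fun i : ℕ => (1/((i:ℝ)+1) : ℝ)) atTop (𝓝 0) :=
    tendsto_one_div_add_atTop_nhds_zero_nat
  have htc : Tendsto (fun i : ℕ => (((1/((i:ℝ)+1) : ℝ)) : ℂ)) atTop (𝓝 ((0:ℝ):ℂ)) :=
    (Complex.continuous_ofReal.tendsto 0).comp htr
  have : (fun i : ℕ => (((1/((i:ℝ)+1) : ℝ)) : ℂ)) = fun i : ℕ => 1/((i:ℂ)+1) := by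
    funext i; push_cast; ring
  rw [this] at htc
  simpa using htc

lemma ratio_tendsto (α β γ : ℂ) (hγ : ∀ i : ℕ, γ+(i:ℂ) ≠ 0) :
    Tendsto (fun i : ℕ => (α+(i:ℂ))*(β+(i:ℂ))/((γ+(i:ℂ))*((i:ℂ)+1))) atTop (𝓝 1) := by
  have h1 : Tendsto (fun i : ℕ => (α+(i:ℂ))/((i:ℂ)+1)) atTop (𝓝 1) := by
    have : ∀ i : ℕ, (α+(i:ℂ))/((i:ℂ)+1) = 1 + (α-1) * (1/((i:ℂ)+1)) := by
      intro i
      field_simp [cast_succ_ne i]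
      ring
    rw [funext this]
    have := (inv_cast_tendsto.const_mul (α-1)).const_add 1
    simpa using this
  have h2 : Tendsto (fun i : ℕ => (β+(i:ℂ))/((i:ℂ)+1)) atTop (𝓝 1) := by
    have : ∀ i : ℕ, (β+(i:ℂ))/((i:ℂ)+1) = 1 + (β-1) * (1/((i:ℂ)+1)) := by
      intro i
      field_simp [cast_succ_ne i]
      ring
    rw [funext this]
    have := (inv_cast_tendsto.const_mul (β-1)).const_add 1
    simpa using this
  have h3 : Tendsto (fun i : ℕ => (γ+(i:ℂ))/((i:ℂ)+1)) atTop (𝓝 1) := by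
    have : ∀ i : ℕ, (γ+(i:ℂ))/((i:ℂ)+1) = 1 + (γ-1) * (1/((i:ℂ)+1)) := by
      intro i
      field_simp [cast_succ_ne i]
      ring
    rw [funext this]
    have := (inv_cast_tendsto.const_mul (γ-1)).const_add 1
    simpa using this
  have h3i : Tendsto (fun i : ℕ => ((i:ℂ)+1)/(γ+(i:ℂ))) atTop (𝓝 1) := by
    have := h3.inv₀ one_ne_zero
    have heq : (fun i : ℕ => ((γ+(i:ℂ))/((i:ℂ)+1))⁻¹) = fun i : ℕ => ((i:ℂ)+1)/(γ+(i:ℂ)) := by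
      funext i; rw [inv_div]
    rw [heq] at this
    simpa using this
  have hcomb := (h1.mul h2).mul h3i
  have heq : (fun i : ℕ => (α+(i:ℂ))/((i:ℂ)+1) * ((β+(i:ℂ))/((i:ℂ)+1)) * (((i:ℂ)+1)/(γ+(i:ℂ))))
      = fun i : ℕ => (α+(i:ℂ))*(β+(i:ℂ))/((γ+(i:ℂ))*((i:ℂ)+1)) := by
    funext i
    field_simp [hγ i, cast_succ_ne i]
  rw [heq] at hcomb
  simpa using hcomb

lemma summableAA (α β γ : ℂ) (hγ : ∀ i : ℕ, γ+(i:ℂ) ≠ 0) (z : ℂ) (hz : ‖z‖ < 1) :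
    Summable (fun i => ‖AA α β γ i * z^i‖) := by
  set r : ℝ := (1+‖z‖)/2 with hr_def
  have hr1 : r < 1 := by rw [hr_def]; linarith
  have hzr : ‖z‖ < r := by rw [hr_def]; linarith
  apply summable_of_ratio_norm_eventually_le hr1
  have htend : Tendsto (fun i : ℕ => ‖(α+(i:ℂ))*(β+(i:ℂ))/((γ+(i:ℂ))*((i:ℂ)+1))‖ * ‖z‖)
      atTop (𝓝 (1 * ‖z‖)) := by
    have h := (ratio_tendsto α β γ hγ).norm.mul_const ‖z‖
    rw [norm_one] at h
    exact h
  have hev : ∀ᶠ i : ℕ in atTop, ‖(α+(i:ℂ))*(β+(i:ℂ))/((γ+(i:ℂ))*((i:ℂ)+1))‖ * ‖z‖ ≤ r := by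
    apply Filter.Tendsto.eventually_le_const _ htend
    rw [one_mul]; exact hzr
  filter_upwards [hev] with i hi
  have hA : AA α β γ (i+1) = (α+(i:ℂ))*(β+(i:ℂ))/((γ+(i:ℂ))*((i:ℂ)+1)) * AA α β γ i := by
    have d1 : (γ+(i:ℂ)) * ((i:ℂ)+1) ≠ 0 := mul_ne_zero (hγ i) (cast_succ_ne i)
    rw [div_mul_eq_mul_div, eq_div_iff d1]
    linear_combination AA_succ α β γ hγ i
  calc ‖‖AA α β γ (i+1) * z^(i+1)‖‖
      = ‖(α+(i:ℂ))*(β+(i:ℂ))/((γ+(i:ℂ))*((i:ℂ)+1))‖ * ‖z‖ * ‖AA α β γ i * z^i‖ := by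
        rw [norm_norm, hA, pow_succ]
        rw [show (α+(i:ℂ))*(β+(i:ℂ))/((γ+(i:ℂ))*((i:ℂ)+1)) * AA α β γ i * (z^i * z)
            = ((α+(i:ℂ))*(β+(i:ℂ))/((γ+(i:ℂ))*((i:ℂ)+1))) * z * (AA α β γ i * z^i) from by ring]
        rw [norm_mul, norm_mul]
    _ ≤ r * ‖AA α β γ i * z^i‖ := by
        apply mul_le_mul_of_nonneg_right hi (norm_nonneg _)
    _ = r * ‖‖AA α β γ i * z^i‖‖ := by rw [norm_norm]

end DC

namespace DC
open Finset Filter Topology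

lemma poch_neg_nat_zero {m n : ℕ} (h : m < n) : poch (-(m:ℂ)) n = 0 := by
  rw [poch_prod]
  apply Finset.prod_eq_zero (Finset.mem_range.mpr h)
  simp

lemma hyp_repr (α β γ : ℂ) (z : ℂ) :
    hyp2F1 α β γ z = ∑' i : ℕ, AA α β γ i * z^i := rfl

lemma cauchy_term (α β γ : ℂ) (z : ℂ) (n : ℕ) :
    ∑ k ∈ range (n+1), (AA α β γ k * z^k) * (AA α β γ (n-k) * z^(n-k))
      = cc α β γ n * z^n := by
  rw [cc, sum_mul]
  apply sum_congr rfl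
  intro k hk
  have hkn : k ≤ n := Nat.lt_succ_iff.mp (mem_range.mp hk)
  have : z^k * z^(n-k) = z^n := by
    rw [← pow_add]
    congr 1
    omega
  calc (AA α β γ k * z^k) * (AA α β γ (n-k) * z^(n-k))
      = AA α β γ k * AA α β γ (n-k) * (z^k * z^(n-k)) := by ring
    _ = AA α β γ k * AA α β γ (n-k) * z^n := by rw [this]

lemma hyp_sq (α β γ : ℂ) (hγ : ∀ i : ℕ, γ+(i:ℂ) ≠ 0) (z : ℂ) (hz : ‖z‖ < 1) :
    hyp2F1 α β γ z ^ 2 = ∑' n : ℕ, cc α β γ n * z^n := by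
  have S := summableAA α β γ hγ z hz
  rw [pow_two, hyp_repr]
  rw [tsum_mul_tsum_eq_tsum_sum_range_of_summable_norm S S]
  exact tsum_congr (cauchy_term α β γ z)

lemma cc_summable (α β γ : ℂ) (hγ : ∀ i : ℕ, γ+(i:ℂ) ≠ 0) (z : ℂ) (hz : ‖z‖ < 1) :
    Summable (fun n : ℕ => cc α β γ n * z^n) := by
  have S := summableAA α β γ hγ z hz
  have h := (summable_norm_sum_mul_range_of_summable_norm S S).of_norm
  exact h.congr (cauchy_term α β γ z)

end DC


open DC Finset Filter Topology in
/-- Degenerate (dihedral) Clausen identity, `n = 0` case: for every nonnegative integer `m`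
and complex `a`, on the unit disk,
`₂F₁(a,−a−m;1/2−m;z)² + C z^{2m+1} ₂F₁(a+m+1/2,1/2−a;m+3/2;z)²
  = ₃F₂(2a,−2a−2m,−m;1/2−m,−2m;z)` (terminating sum). -/
theorem dihedral_clausen_n0 (m : ℕ) (a : ℂ) :
    ∀ z : ℂ, ‖z‖ < 1 →
      hyp2F1 a (-a - m) (1/2 - m) z ^ 2 +
        (poch (a + 1/2) m)^2 * (poch a (m+1))^2 /
          ((poch (1/2) m)^2 * (poch (1/2) (m+1))^2) *
          z ^ (2*m+1) * hyp2F1 (a + m + 1/2) (1/2 - a) ((m:ℂ) + 3/2) z ^ 2 =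
      ∑ k ∈ Finset.range (m+1),
        poch (2*a) k * poch (-2*a - 2*m) k * poch (-(m:ℂ)) k /
          (poch (1/2 - m) k * poch (-2*(m:ℂ)) k * (Nat.factorial k : ℂ)) * z ^ k := by
  intro z hz
  have hγ1 : ∀ i : ℕ, (1/2:ℂ)-(m:ℂ)+(i:ℂ) ≠ 0 := half_sub_ne' m
  have hγ2 : ∀ i : ℕ, (m:ℂ)+3/2+(i:ℂ) ≠ 0 := half_add_ne m
  set C : ℂ := (poch (a + 1/2) m)^2 * (poch a (m+1))^2 /
      ((poch (1/2) m)^2 * (poch (1/2) (m+1))^2) with hC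
  -- squares as power series
  have hsq1 : hyp2F1 a (-a - m) (1/2 - m) z ^ 2
      = ∑' n : ℕ, cc a (-a - (m:ℂ)) (1/2 - (m:ℂ)) n * z^n := hyp_sq _ _ _ hγ1 z hz
  have hsq2 : hyp2F1 (a + m + 1/2) (1/2 - a) ((m:ℂ) + 3/2) z ^ 2
      = ∑' n : ℕ, cc (a + (m:ℂ) + 1/2) (1/2 - a) ((m:ℂ) + 3/2) n * z^n := hyp_sq _ _ _ hγ2 z hz
  have hsum1 : Summable (fun n : ℕ => cc a (-a - (m:ℂ)) (1/2 - (m:ℂ)) n * z^n) :=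
    cc_summable _ _ _ hγ1 z hz
  -- split the first series
  have hsplit := (Summable.sum_add_tsum_nat_add (f := fun n : ℕ => cc a (-a - (m:ℂ)) (1/2 - (m:ℂ)) n * z^n)
    (2*m+1) hsum1).symm
  -- tail computation
  have htail : ∑' i : ℕ, cc a (-a - (m:ℂ)) (1/2 - (m:ℂ)) (i + (2*m+1)) * z^(i + (2*m+1))
      = (-C * z^(2*m+1)) * ∑' n : ℕ, cc (a + (m:ℂ) + 1/2) (1/2 - a) ((m:ℂ) + 3/2) n * z^n := by
    rw [← tsum_mul_left]
    apply tsum_congr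
    intro i
    have hidx : i + (2*m+1) = 2*m+1+i := by omega
    rw [hidx, Z2 m a i, pow_add]
    rw [hC]
    ring
  rw [hsq1, hsq2, hsplit, htail]
  -- cancellation
  have hcancel : ∀ (S T : ℂ), (S + (-C * z^(2*m+1)) * T) + C * z^(2*m+1) * T = S := by
    intro S T; ring
  rw [hcancel]
  -- finite part
  have hfin : ∑ n ∈ range (2*m+1), cc a (-a - (m:ℂ)) (1/2 - (m:ℂ)) n * z^n
      = ∑ n ∈ range (2*m+1), RR m a n * z^n := by
    apply sum_congr rfl
    intro n hn
    have := mem_range.mp hn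
    rw [Z1 m a n (by omega)]
  rw [hfin]
  have hvanish : ∀ x ∈ range (2*m+1), x ∉ range (m+1) → RR m a x * z^x = 0 := by
    intro x hx hnx
    have h1 : m < x := by
      have := mem_range.mp hx
      simp only [mem_range, not_lt] at hnx
      omega
    rw [RR, poch_neg_nat_zero h1]
    simp
  rw [← Finset.sum_subset (Finset.range_subset_range.mpr (by omega : m+1 ≤ 2*m+1)) hvanish]
  rfl
end

section
/- The square y(z) = ₂F₁(a,b;c;z)² satisfies, as a formal power series (or analytic function on |z|<1), the third-order equation z(θ+2a)(θ+2b)(θ+a+b)y − θ(θ+c−1)(θ+2c−2)y + ((2a+2b−2c+1)z/(z−1))·((a+b−c+1)θ + 2ab)y = 0, where θ = z·d/dz, assuming c is not a nonpositive integer. -/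
/-- The square of the Gauss hypergeometric series, `y(z) = ₂F₁(a,b;c;z)²`. -/
noncomputable def hyp2F1sq (a b c : ℂ) : ℂ → ℂ := fun z =>
  (∑' k : ℕ, poch a k * poch b k / (poch c k * (Nat.factorial k : ℂ)) * z ^ k) ^ 2

/-- The Euler operator `θ = z d/dz`. -/
noncomputable def eulerOp (f : ℂ → ℂ) : ℂ → ℂ := fun z => z * deriv f z

namespace Hyp2F1Aux

noncomputable def fc (a b c : ℂ) (k : ℕ) : ℂ :=
  poch a k * poch b k / (poch c k * (Nat.factorial k : ℂ))

lemma poch_succ (x : ℂ) (k : ℕ) : poch x (k+1) = poch x k * (x + k) := by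
  simp [poch, ascPochhammer_succ_right, Polynomial.eval_mul]

lemma poch_ne_zero {c : ℂ} (hc : ∀ j : ℕ, c ≠ -(j:ℂ)) (k : ℕ) : poch c k ≠ 0 := by
  induction k with
  | zero => simp [poch]
  | succ n ih =>
    rw [poch_succ]
    refine mul_ne_zero ih ?_
    intro h
    exact hc n (by linear_combination h)

lemma fc_succ (a b : ℂ) {c : ℂ} (hc : ∀ j : ℕ, c ≠ -(j:ℂ)) (k : ℕ) :
    fc a b c (k+1) = fc a b c k * ((a + k) * (b + k) / ((c + k) * (k+1))) := by
  have h1 : poch c k ≠ 0 := poch_ne_zero hc k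
  have h2 : (c + k) ≠ 0 := by
    intro h; exact hc k (by linear_combination h)
  have h3 : ((k:ℂ) + 1) ≠ 0 := Nat.cast_add_one_ne_zero k
  have h4 : ((Nat.factorial k : ℕ) : ℂ) ≠ 0 := by
    exact_mod_cast Nat.cast_ne_zero.mpr (Nat.factorial_ne_zero k)
  simp only [fc, poch_succ, Nat.factorial_succ, Nat.cast_mul]
  field_simp
  push_cast; ring

lemma norm_fc_succ (a b : ℂ) {c : ℂ} (hc : ∀ j : ℕ, c ≠ -(j:ℂ)) (k : ℕ) :
    ‖fc a b c (k+1)‖ = ‖fc a b c k‖ * (‖a + k‖ * ‖b + k‖ / (‖c + k‖ * (k+1))) := by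
  rw [fc_succ a b hc k]
  have : ‖(k:ℂ) + 1‖ = (k:ℝ) + 1 := by
    rw [show ((k:ℂ) + 1) = ((k+1 : ℕ) : ℂ) by push_cast; ring]
    rw [Complex.norm_natCast]; push_cast; ring
  rw [norm_mul, norm_div, norm_mul, norm_mul, this]


lemma tendsto_shift_div (v w : ℂ) (hv : ∀ k : ℕ, v + k ≠ 0) :
    Filter.Tendsto (fun k : ℕ => (w + k) / (v + k)) Filter.atTop (nhds 1) := by
  have key : Filter.Tendsto (fun k : ℕ => (w - v) / (v + k)) Filter.atTop (nhds 0) := by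
    apply squeeze_zero_norm' (a := fun k : ℕ => ‖w - v‖ / ((k:ℝ) - ‖v‖))
    · filter_upwards [Filter.eventually_ge_atTop (⌈‖v‖⌉₊ + 1)] with k hk
      have hk' : ‖v‖ + 1 ≤ (k:ℝ) := by
        have h2 : (⌈‖v‖⌉₊ : ℝ) + 1 ≤ (k:ℝ) := by exact_mod_cast hk
        linarith [Nat.le_ceil ‖v‖]
      have hnorm : (k:ℝ) - ‖v‖ ≤ ‖v + k‖ := by
        have := norm_sub_le ((v : ℂ) + k) v
        simp only [add_sub_cancel_left] at this
        have h2 : ‖(k:ℂ)‖ = (k:ℝ) := Complex.norm_natCast k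
        linarith
      rw [norm_div]
      apply div_le_div_of_nonneg_left (norm_nonneg _) (by linarith) hnorm
    · apply Filter.Tendsto.div_atTop tendsto_const_nhds
      exact Filter.tendsto_atTop_add_const_right _ _ tendsto_natCast_atTop_atTop
  have : (fun k : ℕ => (w + k) / (v + k)) = fun k : ℕ => 1 + (w - v) / (v + k) := by
    funext k
    field_simp [hv k]
    ring
  rw [this]
  have := (tendsto_const_nhds (x := (1:ℂ)) (f := Filter.atTop (α := ℕ))).add key
  simpa using this

lemma tendsto_ratio {a b c : ℂ} (hc : ∀ j : ℕ, c ≠ -(j:ℂ)) :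
    Filter.Tendsto (fun k : ℕ => ‖a + k‖ * ‖b + k‖ / (‖c + k‖ * ((k:ℝ)+1)))
      Filter.atTop (nhds 1) := by
  have hcne : ∀ k : ℕ, c + k ≠ 0 := fun k h => hc k (by linear_combination h)
  have h1ne : ∀ k : ℕ, (1:ℂ) + k ≠ 0 := by
    intro k
    have := Nat.cast_add_one_ne_zero (R := ℂ) k
    intro h; apply this; linear_combination h
  have t1 : Filter.Tendsto (fun k : ℕ => (a + k) / (c + k)) Filter.atTop (nhds 1) :=
    tendsto_shift_div c a hcne
  have t2 : Filter.Tendsto (fun k : ℕ => (b + k) / (1 + k)) Filter.atTop (nhds 1) :=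
    tendsto_shift_div 1 b h1ne
  have := (t1.mul t2).norm
  simp only [norm_one, mul_one] at this
  apply this.congr
  intro k
  have h1 : ‖(1:ℂ) + k‖ = (k:ℝ) + 1 := by
    rw [show ((1:ℂ) + k) = ((k+1 : ℕ) : ℂ) by push_cast; ring]
    rw [Complex.norm_natCast]; push_cast; ring
  rw [norm_mul, norm_div, norm_div, h1, div_mul_div_comm]

lemma summable_master (a b : ℂ) {c : ℂ} (hc : ∀ j : ℕ, c ≠ -(j:ℂ)) (j : ℕ) {r : ℝ}
    (h0 : 0 ≤ r) (h1 : r < 1) :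
    Summable (fun k : ℕ => (k:ℝ)^j * ‖fc a b c k‖ * r^k) := by
  apply summable_of_ratio_norm_eventually_le (r := (1+r)/2) (by linarith)
  have hG : Filter.Tendsto
      (fun k : ℕ => (((k:ℝ)+1)/k)^j * (‖a + k‖ * ‖b + k‖ / (‖c + k‖ * ((k:ℝ)+1))) * r)
      Filter.atTop (nhds r) := by
    have hq := tendsto_ratio (a := a) (b := b) hc
    have hdiv : Filter.Tendsto (fun k : ℕ => ((k:ℝ)+1)/k) Filter.atTop (nhds 1) := by
      have h0' : Filter.Tendsto (fun k : ℕ => 1 + 1/(k:ℝ)) Filter.atTop (nhds 1) := by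
        have := tendsto_one_div_atTop_nhds_zero_nat (𝕜 := ℝ)
        have h := (tendsto_const_nhds (x := (1:ℝ)) (f := Filter.atTop (α := ℕ))).add this
        simpa using h
      apply h0'.congr'
      filter_upwards [Filter.eventually_ge_atTop 1] with k hk
      have : (k:ℝ) ≠ 0 := Nat.cast_ne_zero.mpr (by omega)
      field_simp
    have := ((hdiv.pow j).mul hq).mul (tendsto_const_nhds (x := r))
    simpa using this
  have hev : ∀ᶠ k : ℕ in Filter.atTop,
      (((k:ℝ)+1)/k)^j * (‖a + k‖ * ‖b + k‖ / (‖c + k‖ * ((k:ℝ)+1))) * r < (1+r)/2 := by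
    apply hG.eventually_lt_const
    linarith
  filter_upwards [hev, Filter.eventually_ge_atTop 1] with k hk hk1
  have hkR : (0:ℝ) < (k:ℝ) := by exact_mod_cast Nat.pos_of_ne_zero (by omega)
  have hnf : ‖fc a b c (k+1)‖ = ‖fc a b c k‖ * (‖a + k‖ * ‖b + k‖ / (‖c + k‖ * ((k:ℝ)+1))) := by
    exact norm_fc_succ a b hc k
  have hpow : (((k:ℝ)+1)/k)^j * (k:ℝ)^j = ((k:ℝ)+1)^j := by
    rw [div_pow, div_mul_cancel₀]
    positivity
  have hterm : ((k:ℝ)+1)^j * ‖fc a b c (k+1)‖ * r^(k+1)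
      = ((((k:ℝ)+1)/k)^j * (‖a + k‖ * ‖b + k‖ / (‖c + k‖ * ((k:ℝ)+1))) * r) * ((k:ℝ)^j * ‖fc a b c k‖ * r^k) := by
    rw [hnf, pow_succ, ← hpow]
    ring
  have hnn : (0:ℝ) ≤ (k:ℝ)^j * ‖fc a b c k‖ * r^k := by positivity
  have hc1 : (((k+1:ℕ)):ℝ) = (k:ℝ)+1 := by push_cast; ring
  rw [Real.norm_of_nonneg (by positivity), Real.norm_of_nonneg hnn, hc1, hterm]
  apply mul_le_mul_of_nonneg_right (le_of_lt hk) hnn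


noncomputable def Tf (a b c : ℂ) (j : ℕ) : ℂ → ℂ := fun w => ∑' k : ℕ, (k:ℂ)^j * fc a b c k * w^k

lemma summable_term (a b : ℂ) {c : ℂ} (hc : ∀ j : ℕ, c ≠ -(j:ℂ)) (j : ℕ) {w : ℂ} (hw : ‖w‖ < 1) :
    Summable (fun k : ℕ => (k:ℂ)^j * fc a b c k * w^k) := by
  apply Summable.of_norm
  have h := summable_master a b hc j (r := ‖w‖) (norm_nonneg w) hw
  apply h.congr
  intro k
  rw [norm_mul, norm_mul, norm_pow, norm_pow, Complex.norm_natCast]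

lemma hasSum_Tf (a b : ℂ) {c : ℂ} (hc : ∀ j : ℕ, c ≠ -(j:ℂ)) (j : ℕ) {w : ℂ} (hw : ‖w‖ < 1) :
    HasSum (fun k : ℕ => (k:ℂ)^j * fc a b c k * w^k) (Tf a b c j w) :=
  (summable_term a b hc j hw).hasSum

lemma hasDerivAt_Tf (a b : ℂ) {c : ℂ} (hc : ∀ j : ℕ, c ≠ -(j:ℂ)) (j : ℕ) {w : ℂ} (hw : ‖w‖ < 1) :
    HasDerivAt (Tf a b c j)
      (∑' k : ℕ, (k:ℂ)^j * fc a b c k * ((k:ℂ) * w^(k-1))) w := by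
  set r : ℝ := (1 + ‖w‖)/2 with hr
  have hr0 : 0 < r := by have := norm_nonneg w; rw [hr]; linarith
  have hr1 : r < 1 := by rw [hr]; linarith
  have hwr : ‖w‖ < r := by rw [hr]; linarith
  have hsum : Summable (fun k : ℕ => (k:ℝ)^(j+1) * ‖fc a b c k‖ * r^(k-1)) := by
    have h := (summable_master a b hc (j+1) (le_of_lt hr0) hr1).mul_left r⁻¹
    apply h.congr
    intro k
    match k with
    | 0 => simp
    | n+1 =>
      have : r^(n+1-1) = r⁻¹ * r^(n+1) := by
        rw [pow_succ]
        field_simp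
        simp
      rw [this]
      ring
  show HasDerivAt (fun z : ℂ => ∑' k : ℕ, (k:ℂ)^j * fc a b c k * z^k)
      (∑' k : ℕ, (k:ℂ)^j * fc a b c k * ((k:ℂ) * w^(k-1))) w
  apply hasDerivAt_tsum_of_isPreconnected
    (g := fun (n : ℕ) (z : ℂ) => (n:ℂ)^j * fc a b c n * z^n)
    (g' := fun (n : ℕ) (y : ℂ) => (n:ℂ)^j * fc a b c n * ((n:ℂ) * y^(n-1)))
    hsum (Metric.isOpen_ball (x := (0:ℂ)) (ε := r))
    ((convex_ball (0:ℂ) r).isPreconnected)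
  · intro n y _
    exact (hasDerivAt_pow n y).const_mul ((n:ℂ)^j * fc a b c n)
  · intro n y hy
    rw [Metric.mem_ball, dist_zero_right] at hy
    rw [norm_mul, norm_mul, norm_mul, norm_pow, Complex.norm_natCast, norm_pow]
    have h1 : ‖y‖^(n-1) ≤ r^(n-1) := pow_le_pow_left₀ (norm_nonneg y) (le_of_lt hy) _
    have h2 : (0:ℝ) ≤ (n:ℝ)^j * ‖fc a b c n‖ * (n:ℝ) := by positivity
    calc (n:ℝ)^j * ‖fc a b c n‖ * ((n:ℝ) * ‖y‖^(n-1))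
        ≤ (n:ℝ)^j * ‖fc a b c n‖ * ((n:ℝ) * r^(n-1)) := by
          apply mul_le_mul_of_nonneg_left _ (by positivity)
          exact mul_le_mul_of_nonneg_left h1 (by positivity)
      _ = (n:ℝ)^(j+1) * ‖fc a b c n‖ * r^(n-1) := by rw [pow_succ]; ring
  · exact Metric.mem_ball_self hr0
  · apply Summable.of_norm
    apply (summable_master a b hc j (r := 0) le_rfl (by norm_num)).congr
    intro k
    rw [norm_mul, norm_mul, norm_pow, norm_pow, Complex.norm_natCast, norm_zero]
  · rw [Metric.mem_ball, dist_zero_right]; exact hwr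

lemma euler_Tf (a b : ℂ) {c : ℂ} (hc : ∀ j : ℕ, c ≠ -(j:ℂ)) (j : ℕ) {w : ℂ} (hw : ‖w‖ < 1) :
    w * (∑' k : ℕ, (k:ℂ)^j * fc a b c k * ((k:ℂ) * w^(k-1))) = Tf a b c (j+1) w := by
  rw [← tsum_mul_left, Tf]
  apply tsum_congr
  intro k
  match k with
  | 0 => simp
  | n+1 =>
    rw [Nat.add_sub_cancel, pow_succ ((n+1:ℕ):ℂ) j, pow_succ w n]
    ring


noncomputable def Td (a b c : ℂ) (j : ℕ) : ℂ → ℂ :=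
  fun w => ∑' k : ℕ, (k:ℂ)^j * fc a b c k * ((k:ℂ) * w^(k-1))

lemma hasDerivAt_Tf' (a b : ℂ) {c : ℂ} (hc : ∀ j : ℕ, c ≠ -(j:ℂ)) (j : ℕ) {w : ℂ} (hw : ‖w‖ < 1) :
    HasDerivAt (Tf a b c j) (Td a b c j w) w := hasDerivAt_Tf a b hc j hw

lemma euler_Td (a b : ℂ) {c : ℂ} (hc : ∀ j : ℕ, c ≠ -(j:ℂ)) (j : ℕ) {w : ℂ} (hw : ‖w‖ < 1) :
    w * Td a b c j w = Tf a b c (j+1) w := euler_Tf a b hc j hw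

lemma fc_rec (a b : ℂ) {c : ℂ} (hc : ∀ j : ℕ, c ≠ -(j:ℂ)) (n : ℕ) :
    ((n:ℂ)+1) * (c+n) * fc a b c (n+1) = (a+n)*(b+n) * fc a b c n := by
  have h2 : (c + n) ≠ 0 := fun h => hc n (by linear_combination h)
  have h3 : ((n:ℂ) + 1) ≠ 0 := Nat.cast_add_one_ne_zero n
  rw [fc_succ a b hc n]
  field_simp

lemma eulerOp_congr_ball {F G : ℂ → ℂ} (h : ∀ w : ℂ, ‖w‖ < 1 → F w = G w) {z : ℂ}
    (hz : ‖z‖ < 1) : eulerOp F z = eulerOp G z := by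
  unfold eulerOp
  have hmem : Metric.ball (0:ℂ) 1 ∈ nhds z :=
    Metric.isOpen_ball.mem_nhds (by simpa [Metric.mem_ball, dist_zero_right] using hz)
  have heq : F =ᶠ[nhds z] G := by
    filter_upwards [hmem] with w hw
    exact h w (by simpa [Metric.mem_ball, dist_zero_right] using hw)
  rw [heq.deriv_eq]

lemma relR1 (a b : ℂ) {c : ℂ} (hc : ∀ j : ℕ, c ≠ -(j:ℂ)) {z : ℂ} (hz : ‖z‖ < 1) :
    Tf a b c 2 z + (c-1) * Tf a b c 1 z
      = z * (Tf a b c 2 z + (a+b) * Tf a b c 1 z + a*b * Tf a b c 0 z) := by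
  have h0 := hasSum_Tf a b hc 0 hz
  have h1 := hasSum_Tf a b hc 1 hz
  have h2 := hasSum_Tf a b hc 2 hz
  have HL : HasSum (fun k : ℕ => ((k:ℂ)^2 + (c-1)*(k:ℂ)) * fc a b c k * z^k)
      (Tf a b c 2 z + (c-1) * Tf a b c 1 z) := by
    have h := h2.add (h1.mul_left (c-1))
    have heq : (fun k : ℕ => (k:ℂ)^2 * fc a b c k * z^k + (c-1) * ((k:ℂ)^1 * fc a b c k * z^k))
        = fun k : ℕ => ((k:ℂ)^2 + (c-1)*(k:ℂ)) * fc a b c k * z^k := by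
      funext k; ring
    rwa [heq] at h
  have HR : HasSum (fun k : ℕ => z * (((k:ℂ)^2 + (a+b)*(k:ℂ) + a*b) * fc a b c k * z^k))
      (z * (Tf a b c 2 z + (a+b) * Tf a b c 1 z + a*b * Tf a b c 0 z)) := by
    have h := ((h2.add (h1.mul_left (a+b))).add (h0.mul_left (a*b))).mul_left z
    have heq : (fun k : ℕ => z * ((k:ℂ)^2 * fc a b c k * z^k
          + (a+b) * ((k:ℂ)^1 * fc a b c k * z^k) + a*b * ((k:ℂ)^0 * fc a b c k * z^k)))
        = fun k : ℕ => z * (((k:ℂ)^2 + (a+b)*(k:ℂ) + a*b) * fc a b c k * z^k) := by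
      funext k; ring
    rwa [heq] at h
  have Hshift : HasSum
      (fun n : ℕ => (((n:ℂ)+1)^2 + (c-1)*((n:ℂ)+1)) * fc a b c (n+1) * z^(n+1))
      (Tf a b c 2 z + (c-1) * Tf a b c 1 z) := by
    have h := (hasSum_nat_add_iff
      (f := fun k : ℕ => ((k:ℂ)^2 + (c-1)*(k:ℂ)) * fc a b c k * z^k) 1).mpr
      (by simpa using HL)
    have heq : (fun n : ℕ => (((n+1:ℕ):ℂ)^2 + (c-1)*((n+1:ℕ):ℂ)) * fc a b c (n+1) * z^(n+1))
        = fun n : ℕ => (((n:ℂ)+1)^2 + (c-1)*((n:ℂ)+1)) * fc a b c (n+1) * z^(n+1) := by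
      funext n; push_cast; ring
    rwa [heq] at h
  have Hterm : (fun n : ℕ => (((n:ℂ)+1)^2 + (c-1)*((n:ℂ)+1)) * fc a b c (n+1) * z^(n+1))
      = fun n : ℕ => z * (((n:ℂ)^2 + (a+b)*(n:ℂ) + a*b) * fc a b c n * z^n) := by
    funext n
    rw [pow_succ z n]
    linear_combination (z^n * z) * fc_rec a b hc n
  rw [Hterm] at Hshift
  exact Hshift.unique HR

lemma relR2 (a b : ℂ) {c : ℂ} (hc : ∀ j : ℕ, c ≠ -(j:ℂ)) {z : ℂ} (hz : ‖z‖ < 1) :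
    Tf a b c 3 z + (c-1) * Tf a b c 2 z
      = z * (Tf a b c 3 z + (a+b+1) * Tf a b c 2 z + (a*b+a+b) * Tf a b c 1 z
          + a*b * Tf a b c 0 z) := by
  have h0 := hasSum_Tf a b hc 0 hz
  have h1 := hasSum_Tf a b hc 1 hz
  have h2 := hasSum_Tf a b hc 2 hz
  have h3 := hasSum_Tf a b hc 3 hz
  have HL : HasSum (fun k : ℕ => ((k:ℂ)^3 + (c-1)*(k:ℂ)^2) * fc a b c k * z^k)
      (Tf a b c 3 z + (c-1) * Tf a b c 2 z) := by
    have h := h3.add (h2.mul_left (c-1))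
    have heq : (fun k : ℕ => (k:ℂ)^3 * fc a b c k * z^k + (c-1) * ((k:ℂ)^2 * fc a b c k * z^k))
        = fun k : ℕ => ((k:ℂ)^3 + (c-1)*(k:ℂ)^2) * fc a b c k * z^k := by
      funext k; ring
    rwa [heq] at h
  have HR : HasSum (fun k : ℕ => z * (((k:ℂ)^3 + (a+b+1)*(k:ℂ)^2 + (a*b+a+b)*(k:ℂ) + a*b)
        * fc a b c k * z^k))
      (z * (Tf a b c 3 z + (a+b+1) * Tf a b c 2 z + (a*b+a+b) * Tf a b c 1 z
        + a*b * Tf a b c 0 z)) := by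
    have h := (((h3.add (h2.mul_left (a+b+1))).add (h1.mul_left (a*b+a+b))).add
      (h0.mul_left (a*b))).mul_left z
    have heq : (fun k : ℕ => z * ((k:ℂ)^3 * fc a b c k * z^k
          + (a+b+1) * ((k:ℂ)^2 * fc a b c k * z^k) + (a*b+a+b) * ((k:ℂ)^1 * fc a b c k * z^k)
          + a*b * ((k:ℂ)^0 * fc a b c k * z^k)))
        = fun k : ℕ => z * (((k:ℂ)^3 + (a+b+1)*(k:ℂ)^2 + (a*b+a+b)*(k:ℂ) + a*b)
          * fc a b c k * z^k) := by
      funext k; ring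
    rwa [heq] at h
  have Hshift : HasSum
      (fun n : ℕ => (((n:ℂ)+1)^3 + (c-1)*((n:ℂ)+1)^2) * fc a b c (n+1) * z^(n+1))
      (Tf a b c 3 z + (c-1) * Tf a b c 2 z) := by
    have h := (hasSum_nat_add_iff
      (f := fun k : ℕ => ((k:ℂ)^3 + (c-1)*(k:ℂ)^2) * fc a b c k * z^k) 1).mpr
      (by simpa using HL)
    have heq : (fun n : ℕ => (((n+1:ℕ):ℂ)^3 + (c-1)*((n+1:ℕ):ℂ)^2) * fc a b c (n+1) * z^(n+1))
        = fun n : ℕ => (((n:ℂ)+1)^3 + (c-1)*((n:ℂ)+1)^2) * fc a b c (n+1) * z^(n+1) := by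
      funext n; push_cast; ring
    rwa [heq] at h
  have Hterm : (fun n : ℕ => (((n:ℂ)+1)^3 + (c-1)*((n:ℂ)+1)^2) * fc a b c (n+1) * z^(n+1))
      = fun n : ℕ => z * (((n:ℂ)^3 + (a+b+1)*(n:ℂ)^2 + (a*b+a+b)*(n:ℂ) + a*b)
        * fc a b c n * z^n) := by
    funext n
    rw [pow_succ z n]
    linear_combination (((n:ℂ)+1) * z^n * z) * fc_rec a b hc n
  rw [Hterm] at Hshift
  exact Hshift.unique HR

end Hyp2F1Aux

open Hyp2F1Aux

/-- `y = ₂F₁(a,b;c;z)²` satisfies the symmetric tensor square equation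
`z(θ+2a)(θ+2b)(θ+a+b)y − θ(θ+c−1)(θ+2c−2)y
  + ((2a+2b−2c+1)z/(z−1))((a+b−c+1)θ y + 2ab y) = 0` on the unit disk. -/
theorem hyp2F1_sq_symmetric_square_ode (a b c : ℂ) (hc : ∀ j : ℕ, c ≠ -(j:ℂ)) :
    ∀ z : ℂ, ‖z‖ < 1 →
      (let y := hyp2F1sq a b c
       let L₁ : ℂ → ℂ := fun w => eulerOp y w + (a + b) * y w
       let L₂ : ℂ → ℂ := fun w => eulerOp L₁ w + 2*b * L₁ w
       let M₁ : ℂ → ℂ := fun w => eulerOp y w + (2*c - 2) * y w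
       let M₂ : ℂ → ℂ := fun w => eulerOp M₁ w + (c - 1) * M₁ w
       z * (eulerOp L₂ z + 2*a * L₂ z) - eulerOp M₂ z +
         ((2*a + 2*b - 2*c + 1) * z / (z - 1)) *
           ((a + b - c + 1) * eulerOp y z + 2*a*b * y z) = 0) := by

  intro z hz
  have hz1 : z - 1 ≠ 0 := by
    intro h
    have hz' : z = 1 := by linear_combination h
    rw [hz'] at hz
    simp at hz
  have hY : hyp2F1sq a b c = fun w => (Tf a b c 0 w)^2 := by
    funext w
    unfold hyp2F1sq Tf
    congr 1
    apply tsum_congr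
    intro k
    simp [fc]
  simp only [hY]
  have hder : ∀ (j : ℕ) (w : ℂ), ‖w‖ < 1 → HasDerivAt (Tf a b c j) (Td a b c j w) w :=
    fun j w hw => hasDerivAt_Tf' a b hc j hw
  have hm : ∀ (j : ℕ) (w : ℂ), ‖w‖ < 1 → w * Td a b c j w = Tf a b c (j+1) w :=
    fun j w hw => euler_Td a b hc j hw
  have A : ∀ w : ℂ, ‖w‖ < 1 → eulerOp (fun v => Tf a b c 0 v ^ 2) w
      = 2 * Tf a b c 0 w * Tf a b c 1 w := by
    intro w hw
    show w * deriv (fun v => Tf a b c 0 v ^ 2) w = _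
    rw [HasDerivAt.deriv (f := fun v => Tf a b c 0 v ^ 2) ((hder 0 w hw).pow 2)]
    simp only [pow_one, Nat.cast_ofNat]
    linear_combination (2 * Tf a b c 0 w) * (hm 0 w hw)
  have B : ∀ (d : ℂ) (w : ℂ), ‖w‖ < 1 →
      eulerOp (fun v => eulerOp (fun u => Tf a b c 0 u ^ 2) v + d * Tf a b c 0 v ^ 2) w
      = 2 * (Tf a b c 1 w ^ 2 + Tf a b c 0 w * Tf a b c 2 w)
        + d * (2 * Tf a b c 0 w * Tf a b c 1 w) := by
    intro d w hw
    rw [eulerOp_congr_ball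
      (G := fun v => 2 * Tf a b c 0 v * Tf a b c 1 v + d * Tf a b c 0 v ^ 2)
      (fun v hv => by rw [A v hv]) hw]
    show w * deriv (fun v => 2 * Tf a b c 0 v * Tf a b c 1 v + d * Tf a b c 0 v ^ 2) w = _
    have h := (((hder 0 w hw).const_mul 2).mul (hder 1 w hw)).add
      (((hder 0 w hw).pow 2).const_mul d)
    rw [HasDerivAt.deriv (f := fun v => 2 * Tf a b c 0 v * Tf a b c 1 v + d * Tf a b c 0 v ^ 2) h]
    simp only [pow_one, Nat.cast_ofNat]
    linear_combination (2 * Tf a b c 1 w + 2 * d * Tf a b c 0 w) * (hm 0 w hw)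
      + (2 * Tf a b c 0 w) * (hm 1 w hw)
  have C : ∀ (d e : ℂ),
      eulerOp (fun v =>
        eulerOp (fun u => eulerOp (fun s => Tf a b c 0 s ^ 2) u + d * Tf a b c 0 u ^ 2) v
          + e * (eulerOp (fun u => Tf a b c 0 u ^ 2) v + d * Tf a b c 0 v ^ 2)) z
      = 6 * Tf a b c 1 z * Tf a b c 2 z + 2 * Tf a b c 0 z * Tf a b c 3 z
        + 2 * d * (Tf a b c 1 z ^ 2 + Tf a b c 0 z * Tf a b c 2 z)
        + e * (2 * (Tf a b c 1 z ^ 2 + Tf a b c 0 z * Tf a b c 2 z)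
            + 2 * d * Tf a b c 0 z * Tf a b c 1 z) := by
    intro d e
    rw [eulerOp_congr_ball
      (G := fun v => 2 * (Tf a b c 1 v ^ 2 + Tf a b c 0 v * Tf a b c 2 v)
        + d * (2 * Tf a b c 0 v * Tf a b c 1 v)
        + e * (2 * Tf a b c 0 v * Tf a b c 1 v + d * Tf a b c 0 v ^ 2))
      (fun v hv => by rw [B d v hv, A v hv]) hz]
    show z * deriv (fun v => 2 * (Tf a b c 1 v ^ 2 + Tf a b c 0 v * Tf a b c 2 v)
        + d * (2 * Tf a b c 0 v * Tf a b c 1 v)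
        + e * (2 * Tf a b c 0 v * Tf a b c 1 v + d * Tf a b c 0 v ^ 2)) z = _
    have h := (((((hder 1 z hz).pow 2).add ((hder 0 z hz).mul (hder 2 z hz))).const_mul 2).add
        ((((hder 0 z hz).const_mul 2).mul (hder 1 z hz)).const_mul d)).add
      (((((hder 0 z hz).const_mul 2).mul (hder 1 z hz)).add
        (((hder 0 z hz).pow 2).const_mul d)).const_mul e)
    rw [HasDerivAt.deriv (f := fun v => 2 * (Tf a b c 1 v ^ 2 + Tf a b c 0 v * Tf a b c 2 v)
          + d * (2 * Tf a b c 0 v * Tf a b c 1 v)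
          + e * (2 * Tf a b c 0 v * Tf a b c 1 v + d * Tf a b c 0 v ^ 2)) h]
    simp only [pow_one, Nat.cast_ofNat]
    linear_combination
      (2 * Tf a b c 2 z + 2 * d * Tf a b c 1 z + 2 * e * Tf a b c 1 z
        + 2 * d * e * Tf a b c 0 z) * (hm 0 z hz)
      + (4 * Tf a b c 1 z + 2 * d * Tf a b c 0 z + 2 * e * Tf a b c 0 z) * (hm 1 z hz)
      + (2 * Tf a b c 0 z) * (hm 2 z hz)
  rw [C (a+b) (2*b), C (2*c-2) (c-1), B (a+b) z hz, A z hz]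
  have hR1 := relR1 a b hc hz
  have hR2 := relR2 a b hc hz
  have halg : ∀ X Y : ℂ, (z-1) * X + (2*a + 2*b - 2*c + 1) * z * Y = 0 →
      X + ((2*a + 2*b - 2*c + 1) * z / (z - 1)) * Y = 0 := by
    intro X Y h
    have h2 : X + ((2*a + 2*b - 2*c + 1) * z / (z - 1)) * Y
        = ((z-1) * X + (2*a + 2*b - 2*c + 1) * z * Y) / (z-1) := by
      field_simp
    rw [h2, h, zero_div]
  apply halg
  linear_combination
    (2 * (1 - z) * Tf a b c 0 z) * hR2
    + (6 * (1 - z) * Tf a b c 1 z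
        + (4*c - 4 + 2*z - 4*z*b - 4*z*a) * Tf a b c 0 z) * hR1
end
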